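/- arXiv:2305.08193 — 8 statements merged into one kernel-verified Lean document; each statement's English description precedes it below -/
import Mathlib

section
/- Suppose M : ℝ^p → ℝ^q is C¹ and for all θ in the ball Θ° = {θ : ‖D₀(θ − θ₀)‖ ≤ r₀} the matrix D(θ)² := ∇M(θ)∇M(θ)ᵀ satisfies D(θ)² ≤ (1+ω)D₀² where D₀² = D(θ₀)² is positive definite. Then for every θ ∈ Θ°, ‖M(θ) − M(θ₀)‖² ≤ (1+ω)‖D₀(θ−θ₀)‖². -/
open Matrix

/-- The `p × q` matrix `∇M(θ)` whose `j`-th column is the gradient of `M_j` at `θ`. -/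
noncomputable def gradMat {p q : ℕ} (M : (Fin p → ℝ) → Fin q → ℝ) (θ : Fin p → ℝ) :
    Matrix (Fin p) (Fin q) ℝ :=
  Matrix.of fun i j => fderiv ℝ (fun t => M t j) θ (Pi.single i 1)

/-- `D(θ)² = ∇M(θ)∇M(θ)ᵀ`. -/
noncomputable def Dmat2 {p q : ℕ} (M : (Fin p → ℝ) → Fin q → ℝ) (θ : Fin p → ℝ) :
    Matrix (Fin p) (Fin p) ℝ :=
  gradMat M θ * (gradMat M θ)ᵀ

lemma quadform_eq {p q : ℕ} (M : (Fin p → ℝ) → Fin q → ℝ) (θ v : Fin p → ℝ) :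
    v ⬝ᵥ (Dmat2 M θ).mulVec v = ∑ j, (fderiv ℝ (fun t => M t j) θ v) ^ 2 := by
  have hcol : ∀ j, ((gradMat M θ)ᵀ *ᵥ v) j = fderiv ℝ (fun t => M t j) θ v := by
    intro j
    rw [show (fderiv ℝ (fun t => M t j) θ) v = (fderiv ℝ (fun t => M t j) θ).toLinearMap v from rfl,
      (fderiv ℝ (fun t => M t j) θ).toLinearMap.pi_apply_eq_sum_univ v]
    simp only [Matrix.mulVec, dotProduct, Matrix.transpose_apply, gradMat,
      Matrix.of_apply, ContinuousLinearMap.coe_coe, smul_eq_mul]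
    refine Finset.sum_congr rfl fun i _ => ?_
    have : (fun k => if i = k then (1:ℝ) else 0) = Pi.single i 1 := by
      ext k; simp [Pi.single_apply, eq_comm]
    rw [this, mul_comm]
  have h1 : v ⬝ᵥ (Dmat2 M θ).mulVec v = ((gradMat M θ)ᵀ *ᵥ v) ⬝ᵥ ((gradMat M θ)ᵀ *ᵥ v) := by
    rw [Dmat2, ← Matrix.mulVec_mulVec, Matrix.dotProduct_mulVec, ← Matrix.mulVec_transpose]
  rw [h1]
  simp only [dotProduct, hcol, sq]

/-- if `D(θ)² ≤ (1+ω) D₀²` on the ellipsoid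
`Θ° = {θ : ‖D₀(θ−θ₀)‖ ≤ r₀}` (where `D₀² = D(θ₀)²` is positive definite and
`‖D₀ v‖² = vᵀ D₀² v`), then `‖M(θ) − M(θ₀)‖² ≤ (1+ω)‖D₀(θ−θ₀)‖²` for all `θ ∈ Θ°`. -/
theorem stmt2 {p q : ℕ} (M : (Fin p → ℝ) → Fin q → ℝ) (θ₀ : Fin p → ℝ)
    (r₀ ω : ℝ) (hr : 0 ≤ r₀) (hω : 0 ≤ ω)
    (hM : ContDiff ℝ 1 M)
    (hpd : (Dmat2 M θ₀).PosDef)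
    (hub : ∀ θ : Fin p → ℝ,
      Real.sqrt ((θ - θ₀) ⬝ᵥ (Dmat2 M θ₀).mulVec (θ - θ₀)) ≤ r₀ →
      ((1 + ω) • Dmat2 M θ₀ - Dmat2 M θ).PosSemidef) :
    ∀ θ : Fin p → ℝ,
      Real.sqrt ((θ - θ₀) ⬝ᵥ (Dmat2 M θ₀).mulVec (θ - θ₀)) ≤ r₀ →
      ∑ j, (M θ j - M θ₀ j) ^ 2
        ≤ (1 + ω) * ((θ - θ₀) ⬝ᵥ (Dmat2 M θ₀).mulVec (θ - θ₀)) := by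
  intro θ hθ
  set v := θ - θ₀ with hv
  set Q := v ⬝ᵥ (Dmat2 M θ₀).mulVec v with hQdef
  have hQ0 : 0 ≤ Q := by
    have := hpd.posSemidef.dotProduct_mulVec_nonneg v
    simpa using this
  have hdiffM : Differentiable ℝ M := hM.differentiable one_ne_zero
  set γ : ℝ → (Fin p → ℝ) := fun t => θ₀ + t • v with hγ
  have hγd : ∀ t : ℝ, HasDerivAt γ v t := by
    intro t
    have : HasDerivAt (fun t : ℝ => t • v) ((1:ℝ) • v) t :=
      (hasDerivAt_id t).smul_const v
    simpa only [one_smul] using this.const_add θ₀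
  set ψ : (Fin q → ℝ) ≃L[ℝ] EuclideanSpace ℝ (Fin q) := (EuclideanSpace.equiv (Fin q) ℝ).symm
    with hψ
  set h : ℝ → EuclideanSpace ℝ (Fin q) := fun t => ψ (M (γ t)) with hh
  have hd : ∀ t : ℝ, HasDerivAt h (ψ (fderiv ℝ M (γ t) v)) t := by
    intro t
    exact (ψ : (Fin q → ℝ) →L[ℝ] EuclideanSpace ℝ (Fin q)).hasFDerivAt.comp_hasDerivAt t
      ((hdiffM (γ t)).hasFDerivAt.comp_hasDerivAt t (hγd t))
  have hnorm : ∀ u : Fin q → ℝ, ‖ψ u‖ = Real.sqrt (∑ j, (u j) ^ 2) := by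
    intro u
    rw [EuclideanSpace.norm_eq]
    congr 1
    refine Finset.sum_congr rfl fun j _ => ?_
    rw [show ψ u j = u j from rfl, Real.norm_eq_abs, sq_abs]
  have hcomp : ∀ x : Fin p → ℝ, ∀ j, (fderiv ℝ M x v) j = fderiv ℝ (fun t => M t j) x v := by
    intro x j
    rw [fderiv_pi (fun i => differentiableAt_pi.1 (hdiffM x) i)]
    rfl
  set K := Real.sqrt ((1 + ω) * Q) with hK
  have hK0 : 0 ≤ K := Real.sqrt_nonneg _
  have bound : ∀ t ∈ Set.Ico (0:ℝ) 1, ‖ψ (fderiv ℝ M (γ t) v)‖ ≤ K := by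
    intro t ht
    have ht0 : 0 ≤ t := ht.1
    have ht1 : t ≤ 1 := le_of_lt ht.2
    -- γ t is in the ellipsoid
    have hsub : γ t - θ₀ = t • v := by simp [hγ]
    have hquad : (γ t - θ₀) ⬝ᵥ (Dmat2 M θ₀).mulVec (γ t - θ₀) = t ^ 2 * Q := by
      rw [hsub, hQdef]
      rw [Matrix.mulVec_smul, smul_dotProduct, dotProduct_smul]
      simp [smul_eq_mul]; ring
    have hmem : Real.sqrt ((γ t - θ₀) ⬝ᵥ (Dmat2 M θ₀).mulVec (γ t - θ₀)) ≤ r₀ := by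
      rw [hquad]
      calc Real.sqrt (t ^ 2 * Q) = t * Real.sqrt Q := by
            rw [Real.sqrt_mul (sq_nonneg t), Real.sqrt_sq ht0]
        _ ≤ 1 * Real.sqrt Q := by
            exact mul_le_mul_of_nonneg_right ht1 (Real.sqrt_nonneg _)
        _ ≤ r₀ := by rw [one_mul]; exact hθ
    have hpsd := (hub (γ t) hmem).dotProduct_mulVec_nonneg v
    have hle : v ⬝ᵥ (Dmat2 M (γ t)).mulVec v ≤ (1 + ω) * Q := by
      have : 0 ≤ v ⬝ᵥ ((1 + ω) • Dmat2 M θ₀ - Dmat2 M (γ t)).mulVec v := by simpa using hpsd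
      rw [Matrix.sub_mulVec, dotProduct_sub, sub_nonneg] at this
      calc v ⬝ᵥ (Dmat2 M (γ t)).mulVec v ≤ v ⬝ᵥ ((1 + ω) • Dmat2 M θ₀).mulVec v := this
        _ = (1 + ω) * Q := by
            rw [Matrix.smul_mulVec, dotProduct_smul, hQdef, smul_eq_mul]
    rw [hnorm]
    have : ∑ j, ((fderiv ℝ M (γ t) v) j) ^ 2 = v ⬝ᵥ (Dmat2 M (γ t)).mulVec v := by
      rw [quadform_eq]
      exact Finset.sum_congr rfl fun j _ => by rw [hcomp]
    rw [this, hK]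
    exact Real.sqrt_le_sqrt hle
  have hmean : ‖h 1 - h 0‖ ≤ K :=
    norm_image_sub_le_of_norm_deriv_le_segment_01'
      (fun t _ => (hd t).hasDerivWithinAt) bound
  have hγ1 : γ 1 = θ := by simp [hγ, hv]
  have hγ0 : γ 0 = θ₀ := by simp [hγ]
  have hdiff : h 1 - h 0 = ψ (M θ - M θ₀) := by
    rw [hh]; simp only [hγ1, hγ0]
    rw [← map_sub]
  rw [hdiff, hnorm] at hmean
  have hsum0 : 0 ≤ ∑ j, (M θ j - M θ₀ j) ^ 2 :=
    Finset.sum_nonneg fun j _ => sq_nonneg _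
  rw [hK] at hmean
  have hmul0 : 0 ≤ (1 + ω) * Q := mul_nonneg (by linarith) hQ0
  exact (Real.sqrt_le_sqrt_iff hmul0).1 hmean
end

section
/- Let M : ℝ^p → ℝ^q be C² and suppose for all θ ∈ Θ° and u ∈ ℝ^p: Σ_j ⟨∇²M_j(θ), u⊗u⟩² ≤ τ²‖D(θ)u‖⁴, where D(θ)² = ∇M(θ)∇M(θ)ᵀ. If ‖M(θ) − η‖ ≤ 2r₀ and 2r₀τ = ρ, then |Σ_j (M_j(θ) − η_j)⟨∇²M_j(θ), u⊗u⟩| ≤ ρ‖D(θ)u‖² for all u; consequently, with H(θ,η) := D(θ)² + Σ_j(M_j(θ)−η_j)∇²M_j(θ) + G², one has −ρD(θ)² ≤ H(θ,η) − (D(θ)² + G²) ≤ ρD(θ)² in the Loewner order. -/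
open Matrix

/-- The Hessian matrix `∇²M_j(θ)`. -/
noncomputable def hessMat {p q : ℕ} (M : (Fin p → ℝ) → Fin q → ℝ) (θ : Fin p → ℝ)
    (j : Fin q) : Matrix (Fin p) (Fin p) ℝ :=
  Matrix.of fun i k =>
    iteratedFDeriv ℝ 2 (fun t => M t j) θ ![Pi.single i 1, Pi.single k 1]

/-- `H(θ,η) := D(θ)² + Σ_j (M_j(θ) − η_j) ∇²M_j(θ) + G²`. -/
noncomputable def Hmat {p q : ℕ} (M : (Fin p → ℝ) → Fin q → ℝ) (θ : Fin p → ℝ)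
    (η : Fin q → ℝ) (G2 : Matrix (Fin p) (Fin p) ℝ) : Matrix (Fin p) (Fin p) ℝ :=
  Dmat2 M θ + (∑ j, (M θ j - η j) • hessMat M θ j) + G2

lemma pi_sum_single {p : ℕ} (v : Fin p → ℝ) :
    v = ∑ i, v i • (Pi.single i 1 : Fin p → ℝ) := by
  funext j
  simp [Finset.sum_apply, Pi.single_apply, mul_ite, Finset.sum_ite_eq', smul_eq_mul]

lemma bilin_expand {p : ℕ} (f : ContinuousMultilinearMap ℝ (fun _ : Fin 2 => (Fin p → ℝ)) ℝ)
    (u : Fin p → ℝ) :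
    f ![u, u] = ∑ i, ∑ k, u i * u k * f ![Pi.single i 1, Pi.single k 1] := by
  have h1 : ∀ v w : Fin p → ℝ, f ![v, w] = ∑ i, v i * f ![Pi.single i 1, w] := by
    intro v w
    have e : ![v, w] = Function.update ![0, w] 0 (∑ i, v i • (Pi.single i 1 : Fin p → ℝ)) := by
      rw [← pi_sum_single]; funext x; fin_cases x <;> simp [Function.update]
    rw [e, ← f.coe_coe, f.toMultilinearMap.map_update_sum]
    refine Finset.sum_congr rfl fun i _ => ?_
    rw [f.toMultilinearMap.map_update_smul]
    have e2 : Function.update ![(0 : Fin p → ℝ), w] 0 (Pi.single i 1) = ![Pi.single i 1, w] := by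
      funext x; fin_cases x <;> simp [Function.update]
    rw [e2]; simp
  have h2 : ∀ v w : Fin p → ℝ, f ![v, w] = ∑ k, w k * f ![v, Pi.single k 1] := by
    intro v w
    have e : ![v, w] = Function.update ![v, 0] 1 (∑ k, w k • (Pi.single k 1 : Fin p → ℝ)) := by
      rw [← pi_sum_single]; funext x; fin_cases x <;> simp [Function.update]
    rw [e, ← f.coe_coe, f.toMultilinearMap.map_update_sum]
    refine Finset.sum_congr rfl fun k _ => ?_
    rw [f.toMultilinearMap.map_update_smul]
    have e2 : Function.update ![v, (0 : Fin p → ℝ)] 1 (Pi.single k 1) = ![v, Pi.single k 1] := by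
      funext x; fin_cases x <;> simp [Function.update]
    rw [e2]; simp
  rw [h1 u u]
  refine Finset.sum_congr rfl fun i _ => ?_
  rw [h2 (Pi.single i 1) u, Finset.mul_sum]
  exact Finset.sum_congr rfl fun k _ => by ring

lemma quad_hess {p q : ℕ} (M : (Fin p → ℝ) → Fin q → ℝ) (θ : Fin p → ℝ) (j : Fin q)
    (u : Fin p → ℝ) :
    u ⬝ᵥ (hessMat M θ j).mulVec u = iteratedFDeriv ℝ 2 (fun s => M s j) θ ![u, u] := by
  rw [bilin_expand (iteratedFDeriv ℝ 2 (fun s => M s j) θ) u]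
  simp only [hessMat, dotProduct, mulVec, Matrix.of_apply, Finset.mul_sum]
  refine Finset.sum_congr rfl fun i _ => ?_
  refine Finset.sum_congr rfl fun k _ => ?_
  ring

lemma hess_herm {p q : ℕ} (M : (Fin p → ℝ) → Fin q → ℝ) (hM : ContDiff ℝ 2 M)
    (θ : Fin p → ℝ) (j : Fin q) : (hessMat M θ j).IsHermitian := by
  have hj : ContDiff ℝ 2 (fun s => M s j) :=
    (ContinuousLinearMap.proj (R := ℝ) (φ := fun _ : Fin q => ℝ) j).contDiff.comp hM
  have hsym : IsSymmSndFDerivAt ℝ (fun s => M s j) θ :=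
    hj.contDiffAt.isSymmSndFDerivAt (by simp)
  ext i k
  simp only [hessMat, conjTranspose_apply, Matrix.of_apply, star_trivial]
  rw [iteratedFDeriv_two_apply, iteratedFDeriv_two_apply]
  simpa using hsym (Pi.single k 1) (Pi.single i 1)

/-- under the second-order tensor bound on `Θ°` and `‖M(θ) − η‖ ≤ 2r₀`
with `ρ = 2r₀τ`, one has `|Σ_j (M_j(θ)−η_j)⟨∇²M_j(θ),u⊗u⟩| ≤ ρ‖D(θ)u‖²` for all `u`,
and consequently `−ρD(θ)² ≤ H(θ,η) − (D(θ)² + G²) ≤ ρD(θ)²` in the Loewner order. -/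
theorem stmt3 {p q : ℕ} (M : (Fin p → ℝ) → Fin q → ℝ)
    (G2 : Matrix (Fin p) (Fin p) ℝ) (Θ : Set (Fin p → ℝ))
    (τ r₀ ρ : ℝ) (θ : Fin p → ℝ) (η : Fin q → ℝ)
    (hM : ContDiff ℝ 2 M) (hτ : 0 ≤ τ) (hr : 0 ≤ r₀) (hρ : ρ = 2 * r₀ * τ)
    (hG : G2.PosSemidef) (hθ : θ ∈ Θ)
    (hk2 : ∀ t ∈ Θ, ∀ u : Fin p → ℝ,
      ∑ j, (iteratedFDeriv ℝ 2 (fun s => M s j) t ![u, u]) ^ 2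
        ≤ τ ^ 2 * (u ⬝ᵥ (Dmat2 M t).mulVec u) ^ 2)
    (hη : Real.sqrt ((M θ - η) ⬝ᵥ (M θ - η)) ≤ 2 * r₀) :
    (∀ u : Fin p → ℝ,
      |∑ j, (M θ j - η j) * iteratedFDeriv ℝ 2 (fun s => M s j) θ ![u, u]|
        ≤ ρ * (u ⬝ᵥ (Dmat2 M θ).mulVec u)) ∧
    (ρ • Dmat2 M θ - (Hmat M θ η G2 - (Dmat2 M θ + G2))).PosSemidef ∧
    ((Hmat M θ η G2 - (Dmat2 M θ + G2)) + ρ • Dmat2 M θ).PosSemidef := by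
  -- notation
  set c : Fin q → ℝ := fun j => M θ j - η j with hc
  set h : Fin q → (Fin p → ℝ) → ℝ :=
    fun j u => iteratedFDeriv ℝ 2 (fun s => M s j) θ ![u, u] with hh
  have hD : (Dmat2 M θ).PosSemidef := by
    have := Matrix.posSemidef_self_mul_conjTranspose (gradMat M θ)
    simpa [Dmat2, Matrix.conjTranspose_eq_transpose_of_trivial] using this
  have hQnn : ∀ u : Fin p → ℝ, 0 ≤ u ⬝ᵥ (Dmat2 M θ).mulVec u := by
    intro u; simpa using hD.dotProduct_mulVec_nonneg u
  -- part 1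
  have part1 : ∀ u : Fin p → ℝ, |∑ j, c j * h j u| ≤ ρ * (u ⬝ᵥ (Dmat2 M θ).mulVec u) := by
    intro u
    set Q := u ⬝ᵥ (Dmat2 M θ).mulVec u with hQ
    have hcs : (∑ j, c j * h j u) ^ 2 ≤ (∑ j, c j ^ 2) * ∑ j, (h j u) ^ 2 :=
      Finset.sum_mul_sq_le_sq_mul_sq _ _ _
    have hc2 : ∑ j, c j ^ 2 ≤ (2 * r₀) ^ 2 := by
      have hd : (M θ - η) ⬝ᵥ (M θ - η) = ∑ j, c j ^ 2 := by
        simp [dotProduct, hc, sq]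
      have h1 : 0 ≤ (M θ - η) ⬝ᵥ (M θ - η) := by
        rw [hd]; exact Finset.sum_nonneg fun j _ => sq_nonneg _
      have := Real.sqrt_le_sqrt (le_of_eq hd.symm)
      calc ∑ j, c j ^ 2 = (M θ - η) ⬝ᵥ (M θ - η) := hd.symm
        _ ≤ (2 * r₀) ^ 2 := by
            have := Real.sqrt_le_sqrt (le_refl ((M θ - η) ⬝ᵥ (M θ - η)))
            nlinarith [Real.sq_sqrt h1, hη, Real.sqrt_nonneg ((M θ - η) ⬝ᵥ (M θ - η))]
    have hh2 : ∑ j, (h j u) ^ 2 ≤ τ ^ 2 * Q ^ 2 := hk2 θ hθ u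
    have hb : (∑ j, c j * h j u) ^ 2 ≤ (ρ * Q) ^ 2 := by
      have h1 : (∑ j, c j ^ 2) * ∑ j, (h j u) ^ 2 ≤ (2 * r₀) ^ 2 * (τ ^ 2 * Q ^ 2) := by
        have hcnn : 0 ≤ ∑ j, c j ^ 2 := Finset.sum_nonneg fun j _ => sq_nonneg _
        have hhnn : 0 ≤ ∑ j, (h j u) ^ 2 := Finset.sum_nonneg fun j _ => sq_nonneg _
        nlinarith
      calc (∑ j, c j * h j u) ^ 2 ≤ (2 * r₀) ^ 2 * (τ ^ 2 * Q ^ 2) := le_trans hcs h1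
        _ = (ρ * Q) ^ 2 := by rw [hρ]; ring
    have hρQ : 0 ≤ ρ * Q := by
      apply mul_nonneg _ (hQnn u)
      rw [hρ]; positivity
    rw [abs_le]
    constructor <;> nlinarith [hb, hρQ]
  -- quadratic form of the sum matrix
  have hSq : ∀ x : Fin p → ℝ,
      x ⬝ᵥ (∑ j, c j • hessMat M θ j).mulVec x = ∑ j, c j * h j x := by
    intro x
    have e : ∀ j : Fin q, c j * h j x = x ⬝ᵥ (c j • hessMat M θ j).mulVec x := by
      intro j
      rw [Matrix.smul_mulVec, dotProduct_smul, smul_eq_mul, quad_hess]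
    rw [Finset.sum_congr rfl fun j _ => e j]
    let L : Matrix (Fin p) (Fin p) ℝ →+ ℝ :=
      { toFun := fun A => x ⬝ᵥ A.mulVec x,
        map_zero' := by simp,
        map_add' := fun A B => by simp [Matrix.add_mulVec, dotProduct_add] }
    exact (map_sum L _ _).symm ▸ rfl
  -- hermitian facts
  have hSH : (∑ j, c j • hessMat M θ j).IsHermitian := by
    show (∑ j, c j • hessMat M θ j)ᴴ = _
    rw [Matrix.conjTranspose_sum]
    refine Finset.sum_congr rfl fun j _ => ?_
    rw [Matrix.conjTranspose_smul, star_trivial, (hess_herm M hM θ j).eq]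
  have hρDH : (ρ • Dmat2 M θ).IsHermitian := by
    show (ρ • Dmat2 M θ)ᴴ = _
    rw [Matrix.conjTranspose_smul, star_trivial, hD.1.eq]
  have hdiff : Hmat M θ η G2 - (Dmat2 M θ + G2) = ∑ j, c j • hessMat M θ j := by
    unfold Hmat; abel
  refine ⟨fun u => part1 u, ?_, ?_⟩
  · rw [hdiff]
    refine Matrix.PosSemidef.of_dotProduct_mulVec_nonneg (hρDH.sub hSH) fun x => ?_
    have h1 := (abs_le.mp (part1 x)).2
    simp only [star_trivial, Matrix.sub_mulVec, dotProduct_sub, Matrix.smul_mulVec,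
      dotProduct_smul, smul_eq_mul, hSq x]
    linarith
  · rw [hdiff]
    refine Matrix.PosSemidef.of_dotProduct_mulVec_nonneg (hSH.add hρDH) fun x => ?_
    have h1 := (abs_le.mp (part1 x)).1
    simp only [star_trivial, Matrix.add_mulVec, dotProduct_add, Matrix.smul_mulVec,
      dotProduct_smul, smul_eq_mul, hSq x]
    linarith
end

section
/- Let A be a p×q real matrix, B a p×p symmetric matrix with (1−ρ)(AAᵀ + G²) ≤ B for 0 ≤ ρ < 1/2, where G² ⪰ 0 and AAᵀ + G² ≻ 0. Consider the block matrix F = [[B, A],[Aᵀ, 2I_q]]. Then F is positive definite, its θθ-block of the inverse satisfies (F⁻¹)_{θθ} ≤ (2/(1−2ρ)) (AAᵀ+G²)⁻¹, and its ηη-block satisfies (F⁻¹)_{ηη} ≤ ((1−ρ)/(1−2ρ)) I_q. -/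
open Matrix

section Helpers
variable {n m : Type*} [Fintype n] [DecidableEq n] [Fintype m] [DecidableEq m]

lemma my_herm_smul {c : ℝ} {M : Matrix n n ℝ} (hM : M.IsHermitian) :
    (c • M).IsHermitian := by
  unfold Matrix.IsHermitian at *
  rw [conjTranspose_smul, hM, star_trivial]

lemma my_psd_smul {c : ℝ} {M : Matrix n n ℝ} (hc : 0 ≤ c) (hM : M.PosSemidef) :
    (c • M).PosSemidef :=
  .of_dotProduct_mulVec_nonneg (my_herm_smul hM.1) fun x => by
    rw [smul_mulVec, dotProduct_smul]
    exact mul_nonneg hc (hM.dotProduct_mulVec_nonneg x)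

lemma my_pd_smul {c : ℝ} {M : Matrix n n ℝ} (hc : 0 < c) (hM : M.PosDef) :
    (c • M).PosDef :=
  .of_dotProduct_mulVec_pos (my_herm_smul hM.1) fun x hx => by
    rw [smul_mulVec, dotProduct_smul]
    exact mul_pos hc (hM.dotProduct_mulVec_pos hx)

lemma my_pd_of_psd {F : Matrix n n ℝ} (hF : F.PosSemidef) (h : IsUnit F.det) :
    F.PosDef := by
  refine .of_dotProduct_mulVec_pos hF.1 fun x hx => lt_of_le_of_ne (hF.dotProduct_mulVec_nonneg x) fun h0 => hx ?_
  have hz : F *ᵥ x = 0 := (hF.dotProduct_mulVec_zero_iff x).mp h0.symm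
  have : F⁻¹ *ᵥ (F *ᵥ x) = x := by
    rw [mulVec_mulVec, nonsing_inv_mul _ h, one_mulVec]
  rw [hz, mulVec_zero] at this
  exact this.symm

lemma my_smul_inv {c : ℝ} {M : Matrix n n ℝ} (hc : c ≠ 0) (h : IsUnit M.det) :
    (c • M)⁻¹ = c⁻¹ • M⁻¹ := by
  apply inv_eq_right_inv
  rw [Matrix.smul_mul, Matrix.mul_smul, mul_nonsing_inv _ h, smul_smul,
    mul_inv_cancel₀ hc, one_smul]

/-- key: inverse is antitone on PosDef matrices. -/
lemma my_inv_antitone {M N : Matrix n n ℝ} (hM : M.PosDef) (hsub : (N - M).PosSemidef) :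
    (M⁻¹ - N⁻¹).PosSemidef := by
  have hN : N.PosDef := by
    have := hM.add_posSemidef hsub
    rwa [add_sub_cancel] at this
  have hMd : IsUnit M.det := (Matrix.isUnit_iff_isUnit_det M).mp hM.isUnit
  have hNd : IsUnit N.det := (Matrix.isUnit_iff_isUnit_det N).mp hN.isUnit
  have hMinv := hM.posSemidef.inv
  have hNinvH : (N⁻¹).IsHermitian := hN.1.inv
  have hEH : (N - M).IsHermitian := hsub.1
  set E := N - M with hE
  have key : M⁻¹ - N⁻¹ = N⁻¹ * E * M⁻¹ * E * N⁻¹ + N⁻¹ * E * N⁻¹ := by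
    have h1 : N⁻¹ * E * M⁻¹ = M⁻¹ - N⁻¹ := by
      rw [hE, Matrix.mul_sub, Matrix.sub_mul, nonsing_inv_mul _ hNd, Matrix.one_mul,
        Matrix.mul_assoc, mul_nonsing_inv _ hMd, Matrix.mul_one]
    have h2 : N⁻¹ * E * N⁻¹ = N⁻¹ * E * M⁻¹ * (M * N⁻¹) := by
      rw [Matrix.mul_assoc (N⁻¹ * E) M⁻¹ (M * N⁻¹), ← Matrix.mul_assoc (M⁻¹) M (N⁻¹),
        nonsing_inv_mul _ hMd, Matrix.one_mul]
    rw [h2, Matrix.mul_assoc (N⁻¹ * E * M⁻¹) E (N⁻¹), ← Matrix.mul_add, ← Matrix.add_mul]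
    have hEM : E + M = N := by rw [hE]; abel
    rw [hEM, mul_nonsing_inv _ hNd, Matrix.mul_one, h1]
  rw [key]
  apply Matrix.PosSemidef.add
  · have h3 := hMinv.mul_mul_conjTranspose_same (N⁻¹ * E)
    have hH : (N⁻¹ * E)ᴴ = E * N⁻¹ := by
      rw [conjTranspose_mul, hEH.eq, hNinvH.eq]
    rw [hH] at h3
    simpa [Matrix.mul_assoc] using h3
  · have h4 := hsub.mul_mul_conjTranspose_same (N⁻¹)
    rw [hNinvH.eq] at h4
    simpa [Matrix.mul_assoc] using h4

/-- sub-projector: `Aᵀ (AAᵀ+G²)⁻¹ A ⪯ 1`. -/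
lemma my_subproj (A : Matrix m n ℝ) {D : Matrix m m ℝ} (hD : D.PosDef)
    (hG : (D - A * Aᵀ).PosSemidef) :
    ((1 : Matrix n n ℝ) - Aᵀ * D⁻¹ * A).PosSemidef := by
  have hDd : IsUnit D.det := (Matrix.isUnit_iff_isUnit_det D).mp hD.isUnit
  have hDinvH : (D⁻¹).IsHermitian := hD.1.inv
  have hAH : Aᴴ = Aᵀ := conjTranspose_eq_transpose_of_trivial A
  set K := (1 : Matrix n n ℝ) - Aᵀ * D⁻¹ * A with hK
  have hAtH : Aᵀᴴ = A := by
    rw [conjTranspose_eq_transpose_of_trivial, transpose_transpose]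
  have hKH : Kᴴ = K := by
    rw [hK, conjTranspose_sub, conjTranspose_one, conjTranspose_mul, conjTranspose_mul,
      hAtH, hDinvH.eq, hAH, Matrix.mul_assoc]
  have key : K = Kᴴ * K + (D⁻¹ * A)ᴴ * (D - A * Aᵀ) * (D⁻¹ * A) := by
    rw [hKH, conjTranspose_mul, hAH, hDinvH.eq, hK]
    simp only [Matrix.mul_sub, Matrix.sub_mul, Matrix.mul_one, Matrix.one_mul,
      Matrix.mul_assoc]
    rw [Matrix.mul_nonsing_inv_cancel_left _ _ hDd]
    abel
  rw [key]
  exact (Matrix.posSemidef_conjTranspose_mul_self K).add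
    (hG.conjTranspose_mul_mul_same (D⁻¹ * A))

end Helpers

/-- for `F = [[B, A],[Aᵀ, 2I_q]]` with `B ⪰ (1−ρ)(AAᵀ+G²)`, `0 ≤ ρ < 1/2`,
`G² ⪰ 0`, `AAᵀ+G² ≻ 0`, the matrix `F` is positive definite,
`(F⁻¹)_{θθ} ⪯ (2/(1−2ρ))(AAᵀ+G²)⁻¹` and `(F⁻¹)_{ηη} ⪯ ((1−ρ)/(1−2ρ)) I_q`. -/
theorem stmt4 {p q : ℕ} (A : Matrix (Fin p) (Fin q) ℝ)
    (B G2 : Matrix (Fin p) (Fin p) ℝ) (ρ : ℝ)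
    (hρ0 : 0 ≤ ρ) (hρ : ρ < 1 / 2) (hB : B.IsSymm) (hG : G2.PosSemidef)
    (hD : (A * Aᵀ + G2).PosDef)
    (hlow : (B - (1 - ρ) • (A * Aᵀ + G2)).PosSemidef) :
    (Matrix.fromBlocks B A Aᵀ ((2:ℝ) • (1 : Matrix (Fin q) (Fin q) ℝ))).PosDef ∧
    ((2 / (1 - 2 * ρ)) • (A * Aᵀ + G2)⁻¹ -
      ((Matrix.fromBlocks B A Aᵀ ((2:ℝ) • (1 : Matrix (Fin q) (Fin q) ℝ)))⁻¹).toBlocks₁₁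
      ).PosSemidef ∧
    (((1 - ρ) / (1 - 2 * ρ)) • (1 : Matrix (Fin q) (Fin q) ℝ) -
      ((Matrix.fromBlocks B A Aᵀ ((2:ℝ) • (1 : Matrix (Fin q) (Fin q) ℝ)))⁻¹).toBlocks₂₂
      ).PosSemidef := by
  have c1 : (0:ℝ) < 1 - 2 * ρ := by linarith
  have c2 : (0:ℝ) < 1 - ρ := by linarith
  have hAH : Aᴴ = Aᵀ := conjTranspose_eq_transpose_of_trivial A
  set D := A * Aᵀ + G2 with hDdef
  have hDdet : IsUnit D.det := (Matrix.isUnit_iff_isUnit_det D).mp hD.isUnit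
  have hG2sub : (D - A * Aᵀ).PosSemidef := by
    rw [hDdef, add_sub_cancel_left]; exact hG
  -- B is positive definite
  have hBpd : B.PosDef := by
    have h := (my_pd_smul c2 hD).add_posSemidef hlow
    rwa [show (1 - ρ) • D + (B - (1 - ρ) • D) = B from by abel] at h
  have hBdet : IsUnit B.det := (Matrix.isUnit_iff_isUnit_det B).mp hBpd.isUnit
  set I2 : Matrix (Fin q) (Fin q) ℝ := (2:ℝ) • 1 with hI2def
  have hI2pd : I2.PosDef := my_pd_smul two_pos Matrix.PosDef.one
  have hI2det : IsUnit I2.det := (Matrix.isUnit_iff_isUnit_det I2).mp hI2pd.isUnit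
  have hI2inv : I2⁻¹ = (2:ℝ)⁻¹ • 1 := by
    rw [hI2def, my_smul_inv two_ne_zero (by simp), inv_one]
  -- the Schur complement w.r.t. the 2•1 block
  have hSeq : B - A * I2⁻¹ * Aᵀ = B - (2:ℝ)⁻¹ • (A * Aᵀ) := by
    rw [hI2inv, Matrix.mul_smul, Matrix.mul_one, Matrix.smul_mul]
  have hdecomp : B - (2:ℝ)⁻¹ • (A * Aᵀ) =
      ((1 - 2 * ρ) / 2) • D + ((B - (1 - ρ) • D) + (2:ℝ)⁻¹ • G2) := by
    rw [hDdef]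
    have hc : ((1:ℝ) - 2 * ρ) / 2 = 2⁻¹ - (2⁻¹ - ((1 - 2*ρ)/2)) := by ring
    module
  have hrestpsd : ((B - (1 - ρ) • D) + (2:ℝ)⁻¹ • G2).PosSemidef :=
    hlow.add (my_psd_smul (by norm_num) hG)
  have hSpd : (B - (2:ℝ)⁻¹ • (A * Aᵀ)).PosDef := by
    rw [hdecomp]
    exact (my_pd_smul (by positivity) hD).add_posSemidef hrestpsd
  have hSpd' : (B - A * I2⁻¹ * Aᵀ).PosDef := by rw [hSeq]; exact hSpd
  have hSdet : IsUnit (B - A * I2⁻¹ * Aᵀ).det :=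
    (Matrix.isUnit_iff_isUnit_det _).mp hSpd'.isUnit
  -- invertibility instances
  letI iI2 : Invertible I2 := I2.invertibleOfIsUnitDet hI2det
  have hI2invOf : ⅟I2 = I2⁻¹ := invOf_eq_nonsing_inv I2
  letI iS : Invertible (B - A * ⅟I2 * Aᵀ) := by
    rw [hI2invOf]; exact (B - A * I2⁻¹ * Aᵀ).invertibleOfIsUnitDet hSdet
  letI iF : Invertible (fromBlocks B A Aᵀ I2) := fromBlocks₂₂Invertible B A Aᵀ I2
  -- F is positive semidefinite, hence positive definite
  have hFpsd : (fromBlocks B A Aᵀ I2).PosSemidef := by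
    rw [← hAH]
    exact (PosDef.fromBlocks₂₂ B A hI2pd).mpr (by rw [hAH]; exact hSpd'.posSemidef)
  have hFpd : (fromBlocks B A Aᵀ I2).PosDef :=
    my_pd_of_psd hFpsd ((Matrix.isUnit_iff_isUnit_det _).mp (isUnit_of_invertible _))
  refine ⟨hFpd, ?_, ?_⟩
  · -- θθ block
    have h11 : ((fromBlocks B A Aᵀ I2)⁻¹).toBlocks₁₁ = (B - A * I2⁻¹ * Aᵀ)⁻¹ := by
      rw [← invOf_eq_nonsing_inv, invOf_fromBlocks₂₂_eq, toBlocks_fromBlocks₁₁,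
        invOf_eq_nonsing_inv, hI2invOf]
    rw [h11, hSeq]
    have hM : (((1 - 2 * ρ) / 2) • D).PosDef := my_pd_smul (by positivity) hD
    have hsub : ((B - (2:ℝ)⁻¹ • (A * Aᵀ)) - ((1 - 2 * ρ) / 2) • D).PosSemidef := by
      rw [hdecomp, show ((1 - 2 * ρ) / 2) • D + ((B - (1 - ρ) • D) + (2:ℝ)⁻¹ • G2)
        - ((1 - 2 * ρ) / 2) • D = (B - (1 - ρ) • D) + (2:ℝ)⁻¹ • G2 from by abel]
      exact hrestpsd
    have h := my_inv_antitone hM hsub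
    rwa [my_smul_inv (by positivity) hDdet, inv_div] at h
  · -- ηη block
    have hBinvle : (((1 - ρ) • D)⁻¹ - B⁻¹).PosSemidef :=
      my_inv_antitone (my_pd_smul c2 hD) hlow
    rw [my_smul_inv c2.ne' hDdet] at hBinvle
    have hconj : (Aᴴ * ((1 - ρ)⁻¹ • D⁻¹ - B⁻¹) * A).PosSemidef :=
      hBinvle.conjTranspose_mul_mul_same A
    rw [hAH] at hconj
    have hsub1 : ((1 : Matrix (Fin q) (Fin q) ℝ) - Aᵀ * D⁻¹ * A).PosSemidef :=
      my_subproj A hD hG2sub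
    -- T := I2 - Aᵀ * B⁻¹ * A
    have hTdiff : (I2 - Aᵀ * B⁻¹ * A) - ((1 - 2 * ρ) / (1 - ρ)) • 1 =
        (1 - ρ)⁻¹ • ((1 : Matrix (Fin q) (Fin q) ℝ) - Aᵀ * D⁻¹ * A) +
          Aᵀ * ((1 - ρ)⁻¹ • D⁻¹ - B⁻¹) * A := by
      have hexp : Aᵀ * ((1 - ρ)⁻¹ • D⁻¹ - B⁻¹) * A
          = (1 - ρ)⁻¹ • (Aᵀ * D⁻¹ * A) - Aᵀ * B⁻¹ * A := by
        rw [Matrix.mul_sub, Matrix.sub_mul, Matrix.mul_smul, Matrix.smul_mul]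
      have hsc : ((1:ℝ) - 2 * ρ) / (1 - ρ) = 2 - (1 - ρ)⁻¹ := by
        field_simp
        ring
      rw [hexp, hI2def, hsc]
      module
    have hTsub : ((I2 - Aᵀ * B⁻¹ * A) - ((1 - 2 * ρ) / (1 - ρ)) • 1).PosSemidef := by
      rw [hTdiff]
      exact (my_psd_smul (by positivity) hsub1).add hconj
    have hTpd : (I2 - Aᵀ * B⁻¹ * A).PosDef := by
      have h := (my_pd_smul (div_pos c1 c2) (Matrix.PosDef.one (n := Fin q) (R := ℝ))).add_posSemidef hTsub
      rwa [show ((1 - 2 * ρ) / (1 - ρ)) • (1 : Matrix (Fin q) (Fin q) ℝ) +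
        ((I2 - Aᵀ * B⁻¹ * A) - ((1 - 2 * ρ) / (1 - ρ)) • 1) = I2 - Aᵀ * B⁻¹ * A from by abel] at h
    have hTdet : IsUnit (I2 - Aᵀ * B⁻¹ * A).det :=
      (Matrix.isUnit_iff_isUnit_det _).mp hTpd.isUnit
    letI iB : Invertible B := B.invertibleOfIsUnitDet hBdet
    have hBinvOf : ⅟B = B⁻¹ := invOf_eq_nonsing_inv B
    letI iT : Invertible (I2 - Aᵀ * ⅟B * A) := by
      rw [hBinvOf]; exact (I2 - Aᵀ * B⁻¹ * A).invertibleOfIsUnitDet hTdet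
    have h22 : ((fromBlocks B A Aᵀ I2)⁻¹).toBlocks₂₂ = (I2 - Aᵀ * B⁻¹ * A)⁻¹ := by
      rw [← invOf_eq_nonsing_inv, invOf_fromBlocks₁₁_eq, toBlocks_fromBlocks₂₂,
        invOf_eq_nonsing_inv, hBinvOf]
    rw [h22]
    have h := my_inv_antitone
      (my_pd_smul (div_pos c1 c2) (Matrix.PosDef.one (n := Fin q) (R := ℝ))) hTsub
    rwa [my_smul_inv (div_pos c1 c2).ne' (by simp), inv_div, inv_one] at h
end

section
/- Let F = [[B, A],[Aᵀ, 2I_q]] be positive definite with B ⪰ (1−ρ)(AAᵀ+G²), AAᵀ+G² ≻ 0, 0 ≤ ρ < 1/2. If a vector w = (u, s) ∈ ℝ^p × ℝ^q satisfies ‖F^{1/2} w‖ ≤ r, then ‖(AAᵀ+G²)^{1/2} u‖² ≤ 2r²/(1−2ρ) and ‖s‖² ≤ (1−ρ)r²/(1−2ρ). -/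
open Matrix

private lemma dp_self_nonneg {n : ℕ} (v : Fin n → ℝ) : 0 ≤ v ⬝ᵥ v :=
  Finset.sum_nonneg fun i _ => mul_self_nonneg (v i)

/-- if `F = [[B, A],[Aᵀ, 2I_q]]` is positive definite with
`B ⪰ (1−ρ)(AAᵀ+G²)`, `AAᵀ+G² ≻ 0`, `0 ≤ ρ < 1/2`, and a vector `w = (u, s)` satisfies
`‖F^{1/2} w‖ ≤ r` (equivalently `√(wᵀFw) ≤ r`), then
`‖(AAᵀ+G²)^{1/2} u‖² = uᵀ(AAᵀ+G²)u ≤ 2r²/(1−2ρ)` and `‖s‖² ≤ (1−ρ)r²/(1−2ρ)`. -/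
theorem stmt6 {p q : ℕ} (A : Matrix (Fin p) (Fin q) ℝ)
    (B G2 : Matrix (Fin p) (Fin p) ℝ) (ρ r : ℝ)
    (u : Fin p → ℝ) (s : Fin q → ℝ)
    (hρ0 : 0 ≤ ρ) (hρ : ρ < 1 / 2) (hG : G2.PosSemidef)
    (hD : (A * Aᵀ + G2).PosDef)
    (hB : (B - (1 - ρ) • (A * Aᵀ + G2)).PosSemidef)
    (hF : (Matrix.fromBlocks B A Aᵀ ((2:ℝ) • (1 : Matrix (Fin q) (Fin q) ℝ))).PosDef)
    (hw : Real.sqrt (Sum.elim u s ⬝ᵥ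
        (Matrix.fromBlocks B A Aᵀ ((2:ℝ) • (1 : Matrix (Fin q) (Fin q) ℝ))).mulVec
          (Sum.elim u s)) ≤ r) :
    u ⬝ᵥ (A * Aᵀ + G2).mulVec u ≤ 2 * r ^ 2 / (1 - 2 * ρ) ∧
    s ⬝ᵥ s ≤ (1 - ρ) * r ^ 2 / (1 - 2 * ρ) := by
  have h1ρ : (0:ℝ) < 1 - ρ := by linarith
  have h2ρ : (0:ℝ) < 1 - 2 * ρ := by linarith
  -- notation
  set F := Matrix.fromBlocks B A Aᵀ ((2:ℝ) • (1 : Matrix (Fin q) (Fin q) ℝ)) with hFdef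
  set w := Sum.elim u s with hwdef
  set Q := w ⬝ᵥ F.mulVec w with hQdef
  set a : Fin q → ℝ := Aᵀ *ᵥ u with hadef
  set a2 := a ⬝ᵥ a with ha2
  set c := a ⬝ᵥ s with hc
  set t2 := s ⬝ᵥ s with ht2
  set bq := u ⬝ᵥ B *ᵥ u with hbq
  set g := u ⬝ᵥ G2 *ᵥ u with hgdef
  set d := u ⬝ᵥ (A * Aᵀ + G2) *ᵥ u with hddef
  have hua : ∀ x : Fin q → ℝ, u ⬝ᵥ A *ᵥ x = a ⬝ᵥ x := by
    intro x
    rw [Matrix.dotProduct_mulVec, hadef, Matrix.mulVec_transpose]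
  -- Q expansion
  have hQeq : Q = bq + 2 * c + 2 * t2 := by
    rw [hQdef, hbq, hc, ht2, hwdef, hFdef, Matrix.fromBlocks_mulVec,
      sumElim_dotProduct_sumElim, Sum.elim_comp_inl, Sum.elim_comp_inr,
      dotProduct_add, dotProduct_add, hua,
      Matrix.smul_mulVec, Matrix.one_mulVec, dotProduct_smul, smul_eq_mul,
      dotProduct_comm s (Aᵀ *ᵥ u), ← hadef]
    ring
  -- d = a2 + g
  have hdeq : d = a2 + g := by
    rw [hddef, ha2, hgdef, Matrix.add_mulVec, dotProduct_add, ← Matrix.mulVec_mulVec,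
      hua, hadef]
  -- g ≥ 0
  have hg0 : 0 ≤ g := by
    have := hG.dotProduct_mulVec_nonneg u
    simpa [hgdef] using this
  -- bq ≥ (1-ρ) d
  have hBineq : 0 ≤ bq - (1 - ρ) * d := by
    have := hB.dotProduct_mulVec_nonneg u
    simp only [Matrix.sub_mulVec, dotProduct_sub, Matrix.smul_mulVec,
      dotProduct_smul, star_trivial, smul_eq_mul] at this
    linarith [this]
  -- Q ≥ 0
  have hQ0 : 0 ≤ Q := by
    have := hF.posSemidef.dotProduct_mulVec_nonneg w
    simpa [hQdef] using this
  -- Q ≤ r²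
  have hQr : Q ≤ r ^ 2 := by
    have h1 : Real.sqrt Q ^ 2 ≤ r ^ 2 := by
      have h0 : 0 ≤ Real.sqrt Q := Real.sqrt_nonneg _
      exact pow_le_pow_left₀ h0 hw 2
    rwa [Real.sq_sqrt hQ0] at h1
  -- square hints
  have hsq1 : 0 ≤ (a + (2:ℝ) • s) ⬝ᵥ (a + (2:ℝ) • s) := dp_self_nonneg _
  have hsq2 : 0 ≤ ((1 - ρ) • a + s) ⬝ᵥ ((1 - ρ) • a + s) := dp_self_nonneg _
  have hex1 : (a + (2:ℝ) • s) ⬝ᵥ (a + (2:ℝ) • s) = a2 + 4 * c + 4 * t2 := by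
    rw [ha2, hc, ht2]
    simp only [dotProduct_add, add_dotProduct, smul_dotProduct,
      dotProduct_smul, smul_eq_mul, dotProduct_comm s a]
    ring
  have hex2 : ((1 - ρ) • a + s) ⬝ᵥ ((1 - ρ) • a + s)
      = (1 - ρ) ^ 2 * a2 + 2 * (1 - ρ) * c + t2 := by
    rw [ha2, hc, ht2]
    simp only [dotProduct_add, add_dotProduct, smul_dotProduct,
      dotProduct_smul, smul_eq_mul, dotProduct_comm s a]
    ring
  rw [hex1] at hsq1
  rw [hex2] at hsq2
  constructor
  · rw [le_div_iff₀ h2ρ]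
    nlinarith [hQeq, hBineq, hsq1, hdeq, hg0, hQr]
  · rw [le_div_iff₀ h2ρ]
    nlinarith [hsq2, mul_nonneg h1ρ.le hBineq,
      mul_nonneg (mul_nonneg h1ρ.le h1ρ.le) hg0,
      mul_le_mul_of_nonneg_left hQr h1ρ.le, hQeq, hdeq]
end

section
/- Let M : ℝ^p → ℝ^q be C³, D(θ)² = ∇M(θ)∇M(θ)ᵀ, and suppose for k = 2,3 and all θ ∈ Θ°, u ∈ ℝ^p: Σ_j ⟨∇^k M_j(θ), u^{⊗k}⟩² ≤ τ^{2k−2}‖D(θ)u‖^{2k}. Fix η with ‖M(θ) − η‖ ≤ 2r₀ and set g(θ) = −½‖M(θ) − η‖². Then |⟨∇³g(θ), u^{⊗3}⟩| ≤ (3 + 2r₀τ)·τ·‖D(θ)u‖³ for all u ∈ ℝ^p and θ ∈ Θ°. -/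
open Matrix

/-- `‖D(θ)u‖² = Σ_j ⟨∇M_j(θ), u⟩²` where `D(θ)² = ∇M(θ)∇M(θ)ᵀ`. -/
noncomputable def Dq {p q : ℕ} (M : (Fin p → ℝ) → Fin q → ℝ)
    (θ : Fin p → ℝ) (u : Fin p → ℝ) : ℝ :=
  ∑ j, (fderiv ℝ (fun t => M t j) θ u) ^ 2

lemma line_iteratedDeriv {E : Type*} [NormedAddCommGroup E] [NormedSpace ℝ E]
    (n : ℕ) (f : E → ℝ) (hf : ContDiff ℝ n f) (θ u : E) :
    ∀ s : ℝ, iteratedDeriv n (fun t : ℝ => f (θ + t • u)) s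
      = iteratedFDeriv ℝ n f (θ + s • u) (fun _ => u) := by
  induction n generalizing f with
  | zero => intro s; simp [iteratedDeriv_zero, iteratedFDeriv_zero_apply]
  | succ n ih =>
    intro s
    have hdiff : Differentiable ℝ (iteratedFDeriv ℝ n f) :=
      hf.differentiable_iteratedFDeriv (by exact_mod_cast Nat.lt_succ_self n)
    have hline : ∀ s : ℝ, HasDerivAt (fun t : ℝ => θ + t • u) u s := fun s => by
      simpa using ((hasDerivAt_id s).smul_const u).const_add θ
    rw [iteratedDeriv_succ]
    have heq : iteratedDeriv n (fun t : ℝ => f (θ + t • u))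
        = fun s => ContinuousMultilinearMap.apply ℝ (fun _ : Fin n => E) ℝ (fun _ => u)
            (iteratedFDeriv ℝ n f (θ + s • u)) := by
      funext s
      exact ih f (hf.of_le (by exact_mod_cast Nat.le_succ n)) s
    rw [heq]
    have h1 : HasDerivAt (fun s : ℝ => iteratedFDeriv ℝ n f (θ + s • u))
        (fderiv ℝ (iteratedFDeriv ℝ n f) (θ + s • u) u) s :=
      ((hdiff _).hasFDerivAt.comp_hasDerivAt s (hline s))
    have h2 := ((ContinuousMultilinearMap.apply ℝ (fun _ : Fin n => E) ℝ
        (fun _ => u)).hasFDerivAt.comp_hasDerivAt s h1)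
    have h2' : HasDerivAt (fun s : ℝ => ContinuousMultilinearMap.apply ℝ (fun _ : Fin n => E) ℝ
        (fun _ => u) (iteratedFDeriv ℝ n f (θ + s • u)))
        (ContinuousMultilinearMap.apply ℝ (fun _ : Fin n => E) ℝ (fun _ => u)
          (fderiv ℝ (iteratedFDeriv ℝ n f) (θ + s • u) u)) s := h2
    rw [h2'.deriv, iteratedFDeriv_succ_apply_left]
    rfl

lemma third_deriv_sum_sq {q : ℕ} (ψ : Fin q → ℝ → ℝ) (η : Fin q → ℝ)
    (hψ : ∀ j, ContDiff ℝ 3 (ψ j)) :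
    iteratedDeriv 3 (fun s => -(1/2 : ℝ) * ∑ j, (ψ j s - η j) * (ψ j s - η j)) 0
      = ∑ j, (-((ψ j 0 - η j) * iteratedDeriv 3 (ψ j) 0)
          - 3 * (iteratedDeriv 1 (ψ j) 0 * iteratedDeriv 2 (ψ j) 0)) := by
  have h31 : ((3 : WithTop ℕ∞)) = 2 + 1 := by norm_num
  have h21 : ((2 : WithTop ℕ∞)) = 1 + 1 := by norm_num
  have hψd : ∀ j, Differentiable ℝ (ψ j) := fun j => (hψ j).differentiable (by norm_num)
  have hd1C : ∀ j, ContDiff ℝ 2 (deriv (ψ j)) := fun j =>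
    (contDiff_succ_iff_deriv.mp (h31 ▸ hψ j)).2.2
  have hd1d : ∀ j, Differentiable ℝ (deriv (ψ j)) := fun j => (hd1C j).differentiable (by norm_num)
  have hd2d : ∀ j, Differentiable ℝ (deriv (deriv (ψ j))) := fun j =>
    ((contDiff_succ_iff_deriv.mp (h21 ▸ hd1C j)).2.2).differentiable (by norm_num)
  have h1 : ∀ j s, HasDerivAt (ψ j) (deriv (ψ j) s) s := fun j s => (hψd j s).hasDerivAt
  have h2 : ∀ j s, HasDerivAt (deriv (ψ j)) (deriv (deriv (ψ j)) s) s := fun j s =>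
    (hd1d j s).hasDerivAt
  have h3 : ∀ j s, HasDerivAt (deriv (deriv (ψ j))) (deriv (deriv (deriv (ψ j))) s) s :=
    fun j s => (hd2d j s).hasDerivAt
  set d1 : Fin q → ℝ → ℝ := fun j => deriv (ψ j) with hd1
  set d2 : Fin q → ℝ → ℝ := fun j => deriv (deriv (ψ j)) with hd2
  set d3 : Fin q → ℝ → ℝ := fun j => deriv (deriv (deriv (ψ j))) with hd3
  have hA : ∀ s, HasDerivAt (fun s => -(1/2 : ℝ) * ∑ j, (ψ j s - η j) * (ψ j s - η j))
      (-(1/2 : ℝ) * ∑ j, (d1 j s * (ψ j s - η j) + (ψ j s - η j) * d1 j s)) s := fun s =>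
    HasDerivAt.const_mul _ (HasDerivAt.fun_sum fun j _ =>
      ((h1 j s).sub_const (η j)).mul ((h1 j s).sub_const (η j)))
  have hB : ∀ s, HasDerivAt
      (fun s => -(1/2 : ℝ) * ∑ j, (d1 j s * (ψ j s - η j) + (ψ j s - η j) * d1 j s))
      (-(1/2 : ℝ) * ∑ j, ((d2 j s * (ψ j s - η j) + d1 j s * d1 j s)
        + (d1 j s * d1 j s + (ψ j s - η j) * d2 j s))) s := fun s =>
    HasDerivAt.const_mul _ (HasDerivAt.fun_sum fun j _ =>
      (((h2 j s).mul ((h1 j s).sub_const (η j))).add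
        (((h1 j s).sub_const (η j)).mul (h2 j s))))
  have hC : HasDerivAt
      (fun s => -(1/2 : ℝ) * ∑ j, ((d2 j s * (ψ j s - η j) + d1 j s * d1 j s)
        + (d1 j s * d1 j s + (ψ j s - η j) * d2 j s)))
      (-(1/2 : ℝ) * ∑ j, (((d3 j 0 * (ψ j 0 - η j) + d2 j 0 * d1 j 0)
          + (d2 j 0 * d1 j 0 + d1 j 0 * d2 j 0))
        + ((d2 j 0 * d1 j 0 + d1 j 0 * d2 j 0)
          + (d1 j 0 * d2 j 0 + (ψ j 0 - η j) * d3 j 0)))) 0 :=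
    HasDerivAt.const_mul _ (HasDerivAt.fun_sum fun j _ =>
      ((((h3 j 0).mul ((h1 j 0).sub_const (η j))).add ((h2 j 0).mul (h2 j 0))).add
        (((h2 j 0).mul (h2 j 0)).add (((h1 j 0).sub_const (η j)).mul (h3 j 0)))))
  have e1 : iteratedDeriv 1 (fun s => -(1/2 : ℝ) * ∑ j, (ψ j s - η j) * (ψ j s - η j))
      = fun s => -(1/2 : ℝ) * ∑ j, (d1 j s * (ψ j s - η j) + (ψ j s - η j) * d1 j s) := by
    rw [iteratedDeriv_one]; funext s; exact (hA s).deriv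
  have e2 : iteratedDeriv 2 (fun s => -(1/2 : ℝ) * ∑ j, (ψ j s - η j) * (ψ j s - η j))
      = fun s => -(1/2 : ℝ) * ∑ j, ((d2 j s * (ψ j s - η j) + d1 j s * d1 j s)
        + (d1 j s * d1 j s + (ψ j s - η j) * d2 j s)) := by
    rw [show (2:ℕ) = 1+1 from rfl, iteratedDeriv_succ, e1]; funext s; exact (hB s).deriv
  have e3 : iteratedDeriv 3 (fun s => -(1/2 : ℝ) * ∑ j, (ψ j s - η j) * (ψ j s - η j)) 0
      = -(1/2 : ℝ) * ∑ j, (((d3 j 0 * (ψ j 0 - η j) + d2 j 0 * d1 j 0)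
          + (d2 j 0 * d1 j 0 + d1 j 0 * d2 j 0))
        + ((d2 j 0 * d1 j 0 + d1 j 0 * d2 j 0)
          + (d1 j 0 * d2 j 0 + (ψ j 0 - η j) * d3 j 0))) := by
    rw [show (3:ℕ) = 2+1 from rfl, iteratedDeriv_succ, e2]; exact hC.deriv
  have ed1 : ∀ j, iteratedDeriv 1 (ψ j) = d1 j := fun j => iteratedDeriv_one
  have ed2 : ∀ j, iteratedDeriv 2 (ψ j) = d2 j := fun j => by
    rw [show (2:ℕ) = 1+1 from rfl, iteratedDeriv_succ, ed1]
  have ed3 : ∀ j, iteratedDeriv 3 (ψ j) = d3 j := fun j => by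
    rw [show (3:ℕ) = 2+1 from rfl, iteratedDeriv_succ, ed2]
  rw [e3, Finset.mul_sum]
  refine Finset.sum_congr rfl fun j _ => ?_
  rw [ed1, ed2, ed3]
  ring

/-- under the `k = 2, 3` tensor bounds on `Θ°` and `‖M(θ) − η‖ ≤ 2r₀`,
the function `g(θ) = −½‖M(θ) − η‖²` satisfies
`|⟨∇³g(θ), u⊗u⊗u⟩| ≤ (3 + 2r₀τ)·τ·‖D(θ)u‖³` on `Θ°`. -/
theorem stmt7 {p q : ℕ} (M : (Fin p → ℝ) → Fin q → ℝ) (Θ : Set (Fin p → ℝ))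
    (τ r₀ : ℝ) (η : Fin q → ℝ)
    (hM : ContDiff ℝ 3 M) (hτ : 0 ≤ τ) (hr : 0 ≤ r₀)
    (hk2 : ∀ θ ∈ Θ, ∀ u : Fin p → ℝ,
      ∑ j, (iteratedFDeriv ℝ 2 (fun t => M t j) θ ![u, u]) ^ 2
        ≤ τ ^ 2 * Dq M θ u ^ 2)
    (hk3 : ∀ θ ∈ Θ, ∀ u : Fin p → ℝ,
      ∑ j, (iteratedFDeriv ℝ 3 (fun t => M t j) θ ![u, u, u]) ^ 2
        ≤ τ ^ 4 * Dq M θ u ^ 3)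
    (hη : ∀ θ ∈ Θ, Real.sqrt ((M θ - η) ⬝ᵥ (M θ - η)) ≤ 2 * r₀) :
    ∀ θ ∈ Θ, ∀ u : Fin p → ℝ,
      |iteratedFDeriv ℝ 3 (fun t => -(1/2) * ((M t - η) ⬝ᵥ (M t - η))) θ ![u, u, u]|
        ≤ (3 + 2 * r₀ * τ) * τ * Real.sqrt (Dq M θ u) ^ 3 := by
  intro θ hθ u
  have hu3 : (![u, u, u] : Fin 3 → (Fin p → ℝ)) = fun _ => u := by
    funext i; fin_cases i <;> rfl
  have hu2 : (![u, u] : Fin 2 → (Fin p → ℝ)) = fun _ => u := by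
    funext i; fin_cases i <;> rfl
  have hMj : ∀ j, ContDiff ℝ 3 (fun t => M t j) := fun j =>
    (ContinuousLinearMap.proj (R := ℝ) (φ := fun _ : Fin q => ℝ) j).contDiff.comp hM
  have hlineC : ContDiff ℝ 3 (fun s : ℝ => θ + s • u) :=
    contDiff_const.add (contDiff_id.smul contDiff_const)
  have hψC : ∀ j, ContDiff ℝ 3 (fun s : ℝ => M (θ + s • u) j) := fun j =>
    (hMj j).comp hlineC
  -- rewrite g as a sum of squares
  have hgeq : (fun t => -(1/2 : ℝ) * ((M t - η) ⬝ᵥ (M t - η)))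
      = fun t => -(1/2 : ℝ) * ∑ j, (M t j - η j) * (M t j - η j) := by
    funext t; simp [dotProduct]
  rw [hgeq, hu3]
  have hgC : ContDiff ℝ 3 (fun t => -(1/2 : ℝ) * ∑ j, (M t j - η j) * (M t j - η j)) :=
    contDiff_const.mul (ContDiff.sum fun j _ =>
      ((hMj j).sub contDiff_const).mul ((hMj j).sub contDiff_const))
  have hgC' : ContDiff ℝ (3 : ℕ) (fun t => -(1/2 : ℝ) * ∑ j, (M t j - η j) * (M t j - η j)) := by
    exact_mod_cast hgC
  -- reduce to the 1-D derivative along the line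
  have hline0 : θ + (0:ℝ) • u = θ := by simp
  have hmain : iteratedFDeriv ℝ 3 (fun t => -(1/2 : ℝ) * ∑ j, (M t j - η j) * (M t j - η j)) θ
        (fun _ => u)
      = iteratedDeriv 3 (fun s : ℝ => -(1/2 : ℝ) * ∑ j, (M (θ + s • u) j - η j)
          * (M (θ + s • u) j - η j)) 0 := by
    have h := line_iteratedDeriv 3 _ hgC' θ u 0
    rw [hline0] at h
    exact h.symm
  rw [hmain]
  -- apply the 1-D third derivative formula
  rw [third_deriv_sum_sq (fun j s => M (θ + s • u) j) η hψC]
  -- identify the 1-D derivatives with the multilinear derivatives of M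
  have hψ0 : ∀ j, M (θ + (0:ℝ) • u) j = M θ j := fun j => by rw [hline0]
  have hMj' : ∀ j, ContDiff ℝ (3 : ℕ) (fun t => M t j) := fun j => by exact_mod_cast hMj j
  have hd1 : ∀ j, iteratedDeriv 1 (fun s : ℝ => M (θ + s • u) j) 0
      = fderiv ℝ (fun t => M t j) θ u := fun j => by
    have h := line_iteratedDeriv 1 _ ((hMj' j).of_le (by norm_num)) θ u 0
    rw [hline0] at h
    rw [h, iteratedFDeriv_one_apply]
  have hd2 : ∀ j, iteratedDeriv 2 (fun s : ℝ => M (θ + s • u) j) 0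
      = iteratedFDeriv ℝ 2 (fun t => M t j) θ ![u, u] := fun j => by
    have h := line_iteratedDeriv 2 _ ((hMj' j).of_le (by norm_num)) θ u 0
    rw [hline0] at h
    rw [h, hu2]
  have hd3 : ∀ j, iteratedDeriv 3 (fun s : ℝ => M (θ + s • u) j) 0
      = iteratedFDeriv ℝ 3 (fun t => M t j) θ ![u, u, u] := fun j => by
    have h := line_iteratedDeriv 3 _ (hMj' j) θ u 0
    rw [hline0] at h
    rw [h, hu3]
  -- abbreviations
  set DQ := Dq M θ u with hDQdef
  set S := Real.sqrt DQ with hSdef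
  have hDQ : DQ = ∑ j, (fderiv ℝ (fun t => M t j) θ u) ^ 2 := rfl
  have hDQ0 : 0 ≤ DQ := by rw [hDQ]; positivity
  have hS0 : 0 ≤ S := Real.sqrt_nonneg _
  have hS2 : S ^ 2 = DQ := Real.sq_sqrt hDQ0
  -- Cauchy–Schwarz bounds
  have habs : ∀ x y : ℝ, |x - y| ≤ |x| + |y| := fun x y => by
    calc |x - y| = |x + -y| := by rw [sub_eq_add_neg]
    _ ≤ |x| + |-y| := abs_add_le x (-y)
    _ = |x| + |y| := by rw [abs_neg]
  have step1 : |∑ j, (-((M (θ + (0:ℝ) • u) j - η j) * iteratedDeriv 3 (fun s : ℝ => M (θ + s • u) j) 0)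
        - 3 * (iteratedDeriv 1 (fun s : ℝ => M (θ + s • u) j) 0
          * iteratedDeriv 2 (fun s : ℝ => M (θ + s • u) j) 0))|
      ≤ (∑ j, |M θ j - η j| * |iteratedFDeriv ℝ 3 (fun t => M t j) θ ![u, u, u]|)
        + 3 * ∑ j, |fderiv ℝ (fun t => M t j) θ u|
            * |iteratedFDeriv ℝ 2 (fun t => M t j) θ ![u, u]| := by
    refine (Finset.abs_sum_le_sum_abs _ _).trans ?_
    rw [Finset.mul_sum, ← Finset.sum_add_distrib]
    refine Finset.sum_le_sum fun j _ => ?_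
    rw [hψ0 j, hd1 j, hd2 j, hd3 j]
    calc |(-((M θ j - η j) * iteratedFDeriv ℝ 3 (fun t => M t j) θ ![u, u, u]))
          - 3 * (fderiv ℝ (fun t => M t j) θ u * iteratedFDeriv ℝ 2 (fun t => M t j) θ ![u, u])|
        ≤ |(-((M θ j - η j) * iteratedFDeriv ℝ 3 (fun t => M t j) θ ![u, u, u]))|
          + |3 * (fderiv ℝ (fun t => M t j) θ u * iteratedFDeriv ℝ 2 (fun t => M t j) θ ![u, u])| :=
        habs _ _
      _ = |M θ j - η j| * |iteratedFDeriv ℝ 3 (fun t => M t j) θ ![u, u, u]|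
          + 3 * (|fderiv ℝ (fun t => M t j) θ u| * |iteratedFDeriv ℝ 2 (fun t => M t j) θ ![u, u]|) := by
        rw [abs_neg, abs_mul, abs_mul, abs_mul]
        norm_num
  -- Cauchy-Schwarz on each sum
  have cs1 : ∑ j, |M θ j - η j| * |iteratedFDeriv ℝ 3 (fun t => M t j) θ ![u, u, u]|
      ≤ Real.sqrt (∑ j, (M θ j - η j) ^ 2)
        * Real.sqrt (∑ j, (iteratedFDeriv ℝ 3 (fun t => M t j) θ ![u, u, u]) ^ 2) := by
    have := Real.sum_mul_le_sqrt_mul_sqrt Finset.univ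
      (fun j => |M θ j - η j|) (fun j => |iteratedFDeriv ℝ 3 (fun t => M t j) θ ![u, u, u]|)
    simpa [sq_abs] using this
  have cs2 : ∑ j, |fderiv ℝ (fun t => M t j) θ u|
        * |iteratedFDeriv ℝ 2 (fun t => M t j) θ ![u, u]|
      ≤ Real.sqrt (∑ j, (fderiv ℝ (fun t => M t j) θ u) ^ 2)
        * Real.sqrt (∑ j, (iteratedFDeriv ℝ 2 (fun t => M t j) θ ![u, u]) ^ 2) := by
    have := Real.sum_mul_le_sqrt_mul_sqrt Finset.univ
      (fun j => |fderiv ℝ (fun t => M t j) θ u|)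
      (fun j => |iteratedFDeriv ℝ 2 (fun t => M t j) θ ![u, u]|)
    simpa [sq_abs] using this
  -- bounds on the individual square roots
  have hR : Real.sqrt (∑ j, (M θ j - η j) ^ 2) ≤ 2 * r₀ := by
    have h := hη θ hθ
    have : (M θ - η) ⬝ᵥ (M θ - η) = ∑ j, (M θ j - η j) ^ 2 := by
      simp [dotProduct, sq]
    rwa [this] at h
  have hB2 : Real.sqrt (∑ j, (iteratedFDeriv ℝ 2 (fun t => M t j) θ ![u, u]) ^ 2)
      ≤ τ * S ^ 2 := by
    have h := (hk2 θ hθ u)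
    have h' : ∑ j, (iteratedFDeriv ℝ 2 (fun t => M t j) θ ![u, u]) ^ 2 ≤ (τ * S ^ 2) ^ 2 := by
      calc ∑ j, (iteratedFDeriv ℝ 2 (fun t => M t j) θ ![u, u]) ^ 2
          ≤ τ ^ 2 * DQ ^ 2 := h
        _ = (τ * S ^ 2) ^ 2 := by rw [hS2]; ring
    calc Real.sqrt (∑ j, (iteratedFDeriv ℝ 2 (fun t => M t j) θ ![u, u]) ^ 2)
        ≤ Real.sqrt ((τ * S ^ 2) ^ 2) := Real.sqrt_le_sqrt h'
      _ = τ * S ^ 2 := Real.sqrt_sq (by positivity)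
  have hC3 : Real.sqrt (∑ j, (iteratedFDeriv ℝ 3 (fun t => M t j) θ ![u, u, u]) ^ 2)
      ≤ τ ^ 2 * S ^ 3 := by
    have h' : ∑ j, (iteratedFDeriv ℝ 3 (fun t => M t j) θ ![u, u, u]) ^ 2
        ≤ (τ ^ 2 * S ^ 3) ^ 2 := by
      calc ∑ j, (iteratedFDeriv ℝ 3 (fun t => M t j) θ ![u, u, u]) ^ 2
          ≤ τ ^ 4 * DQ ^ 3 := hk3 θ hθ u
        _ = (τ ^ 2 * S ^ 3) ^ 2 := by rw [← hS2]; ring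
    calc Real.sqrt (∑ j, (iteratedFDeriv ℝ 3 (fun t => M t j) θ ![u, u, u]) ^ 2)
        ≤ Real.sqrt ((τ ^ 2 * S ^ 3) ^ 2) := Real.sqrt_le_sqrt h'
      _ = τ ^ 2 * S ^ 3 := Real.sqrt_sq (by positivity)
  have hA1 : Real.sqrt (∑ j, (fderiv ℝ (fun t => M t j) θ u) ^ 2) = S := by
    rw [hSdef, hDQ]
  -- put everything together
  have sqrtR0 : (0:ℝ) ≤ Real.sqrt (∑ j, (M θ j - η j) ^ 2) := Real.sqrt_nonneg _
  have sqrtC0 : (0:ℝ) ≤ Real.sqrt (∑ j, (iteratedFDeriv ℝ 3 (fun t => M t j) θ ![u, u, u]) ^ 2) :=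
    Real.sqrt_nonneg _
  have sqrtB0 : (0:ℝ) ≤ Real.sqrt (∑ j, (iteratedFDeriv ℝ 2 (fun t => M t j) θ ![u, u]) ^ 2) :=
    Real.sqrt_nonneg _
  have hfin1 : Real.sqrt (∑ j, (M θ j - η j) ^ 2)
        * Real.sqrt (∑ j, (iteratedFDeriv ℝ 3 (fun t => M t j) θ ![u, u, u]) ^ 2)
      ≤ (2 * r₀) * (τ ^ 2 * S ^ 3) :=
    mul_le_mul hR hC3 sqrtC0 (by positivity)
  have hfin2 : Real.sqrt (∑ j, (fderiv ℝ (fun t => M t j) θ u) ^ 2)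
        * Real.sqrt (∑ j, (iteratedFDeriv ℝ 2 (fun t => M t j) θ ![u, u]) ^ 2)
      ≤ S * (τ * S ^ 2) := by
    rw [hA1]
    exact mul_le_mul_of_nonneg_left hB2 hS0
  calc |∑ j, (-((M (θ + (0:ℝ) • u) j - η j) * iteratedDeriv 3 (fun s : ℝ => M (θ + s • u) j) 0)
        - 3 * (iteratedDeriv 1 (fun s : ℝ => M (θ + s • u) j) 0
          * iteratedDeriv 2 (fun s : ℝ => M (θ + s • u) j) 0))|
      ≤ (∑ j, |M θ j - η j| * |iteratedFDeriv ℝ 3 (fun t => M t j) θ ![u, u, u]|)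
        + 3 * ∑ j, |fderiv ℝ (fun t => M t j) θ u|
            * |iteratedFDeriv ℝ 2 (fun t => M t j) θ ![u, u]| := step1
    _ ≤ (2 * r₀) * (τ ^ 2 * S ^ 3) + 3 * (S * (τ * S ^ 2)) := by
        gcongr
        · exact cs1.trans hfin1
        · exact cs2.trans hfin2
    _ = (3 + 2 * r₀ * τ) * τ * S ^ 3 := by ring
end

section
/- Under the assumptions of the previous third-derivative bound and additionally Σ_j ⟨∇⁴M_j(θ), u^{⊗4}⟩² ≤ τ⁶‖D(θ)u‖⁸ for all θ ∈ Θ°, u, the function g(θ) = −½‖M(θ)−η‖² satisfies |⟨∇⁴g(θ), u^{⊗4}⟩| ≤ (7 + 2r₀τ)·τ²·‖D(θ)u‖⁴. -/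
open Matrix

lemma iteratedDeriv_line {E F : Type*} [NormedAddCommGroup E] [NormedSpace ℝ E]
    [NormedAddCommGroup F] [NormedSpace ℝ F]
    {f : E → F} {n : ℕ} (hf : ContDiff ℝ n f) (x u : E) :
    ∀ k, k ≤ n → ∀ t : ℝ,
      iteratedDeriv k (fun s : ℝ => f (x + s • u)) t
        = iteratedFDeriv ℝ k f (x + t • u) (fun _ => u) := by
  intro k
  induction k with
  | zero => intro _ t; simp [iteratedDeriv_zero, iteratedFDeriv_zero_apply]
  | succ k ih =>
    intro hk t
    have hk' : k ≤ n := le_trans (Nat.le_succ k) hk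
    have hfun : iteratedDeriv k (fun s : ℝ => f (x + s • u))
        = fun s : ℝ => iteratedFDeriv ℝ k f (x + s • u) (fun _ => u) :=
      funext fun s => ih hk' s
    rw [iteratedDeriv_succ, hfun]
    -- derivative of s ↦ (iteratedFDeriv k f (x + s•u)) (fun _ => u)
    have hL : HasDerivAt (fun s : ℝ => x + s • u) u t := by
      simpa using ((hasDerivAt_id t).smul_const u).const_add x
    have hdiff : DifferentiableAt ℝ (iteratedFDeriv ℝ k f) (x + t • u) := by
      have : (k : WithTop ℕ∞) < n := by exact_mod_cast Nat.lt_of_succ_le hk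
      exact (hf.differentiable_iteratedFDeriv this).differentiableAt
    have hD := hdiff.hasFDerivAt
    have hA := (ContinuousMultilinearMap.apply ℝ (fun _ : Fin k => E) F
      (fun _ => u)).hasFDerivAt (x := iteratedFDeriv ℝ k f (x + t • u))
    have hcomp := (hA.comp _ hD).comp_hasDerivAt t hL
    simp only [Function.comp_def] at hcomp
    have hcomp' : HasDerivAt (fun s : ℝ => iteratedFDeriv ℝ k f (x + s • u) (fun _ => u))
        (((ContinuousMultilinearMap.apply ℝ (fun _ : Fin k => E) F (fun _ => u)).comp
          (fderiv ℝ (iteratedFDeriv ℝ k f) (x + t • u))) u) t := hcomp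
    rw [hcomp'.deriv]
    simp only [ContinuousLinearMap.coe_comp', Function.comp_apply]
    rw [iteratedFDeriv_succ_apply_left]
    rfl

lemma fourth_deriv_sq {q : ℕ} (φ : Fin q → ℝ → ℝ) (a : Fin q → ℝ)
    (hφ : ∀ j, ContDiff ℝ 4 (φ j)) :
    iteratedDeriv 4 (fun t : ℝ => ∑ j, -(1/2 : ℝ) * (φ j t - a j) ^ 2) 0
      = ∑ j, -(3 * (iteratedDeriv 2 (φ j) 0) ^ 2
          + 4 * (iteratedDeriv 1 (φ j) 0) * (iteratedDeriv 3 (φ j) 0)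
          + (φ j 0 - a j) * (iteratedDeriv 4 (φ j) 0)) := by
  have hd : ∀ j, ∀ k : ℕ, k < 4 → ∀ t : ℝ,
      HasDerivAt (iteratedDeriv k (φ j)) (iteratedDeriv (k+1) (φ j) t) t := by
    intro j k hk t
    have hdiff : DifferentiableAt ℝ (iteratedDeriv k (φ j)) t :=
      ((hφ j).differentiable_iteratedDeriv k (by exact_mod_cast hk)).differentiableAt
    simpa [iteratedDeriv_succ] using hdiff.hasDerivAt
  have h0 : ∀ j, ∀ t : ℝ, HasDerivAt (φ j) (iteratedDeriv 1 (φ j) t) t := by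
    intro j t
    simpa [iteratedDeriv_zero] using hd j 0 (by norm_num) t
  have e1 : deriv (fun t : ℝ => ∑ j, -(1/2 : ℝ) * (φ j t - a j) ^ 2)
      = fun t : ℝ => ∑ j, -((φ j t - a j) * iteratedDeriv 1 (φ j) t) := by
    funext t
    refine HasDerivAt.deriv (HasDerivAt.fun_sum fun j _ => ?_)
    have := (((h0 j t).sub_const (a j)).fun_pow 2).const_mul (-(1/2 : ℝ))
    convert this using 1
    rfl
    ring
  have e2 : deriv (fun t : ℝ => ∑ j, -((φ j t - a j) * iteratedDeriv 1 (φ j) t))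
      = fun t : ℝ => ∑ j, -((iteratedDeriv 1 (φ j) t) ^ 2
          + (φ j t - a j) * iteratedDeriv 2 (φ j) t) := by
    funext t
    refine HasDerivAt.deriv (HasDerivAt.fun_sum fun j _ => ?_)
    have := (((h0 j t).sub_const (a j)).fun_mul (hd j 1 (by norm_num) t)).fun_neg
    convert this using 1
    ring
  have e3 : deriv (fun t : ℝ => ∑ j, -((iteratedDeriv 1 (φ j) t) ^ 2
          + (φ j t - a j) * iteratedDeriv 2 (φ j) t))
      = fun t : ℝ => ∑ j, -(3 * ((iteratedDeriv 1 (φ j) t) * iteratedDeriv 2 (φ j) t)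
          + (φ j t - a j) * iteratedDeriv 3 (φ j) t) := by
    funext t
    refine HasDerivAt.deriv (HasDerivAt.fun_sum fun j _ => ?_)
    have := (((hd j 1 (by norm_num) t).fun_pow 2).fun_add
      (((h0 j t).sub_const (a j)).fun_mul (hd j 2 (by norm_num) t))).fun_neg
    convert this using 1
    ring
  have e4 : deriv (fun t : ℝ => ∑ j, -(3 * ((iteratedDeriv 1 (φ j) t) * iteratedDeriv 2 (φ j) t)
          + (φ j t - a j) * iteratedDeriv 3 (φ j) t))
      = fun t : ℝ => ∑ j, -(3 * (iteratedDeriv 2 (φ j) t) ^ 2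
          + 4 * (iteratedDeriv 1 (φ j) t) * (iteratedDeriv 3 (φ j) t)
          + (φ j t - a j) * (iteratedDeriv 4 (φ j) t)) := by
    funext t
    refine HasDerivAt.deriv (HasDerivAt.fun_sum fun j _ => ?_)
    have := ((((hd j 1 (by norm_num) t).fun_mul (hd j 2 (by norm_num) t)).const_mul (3:ℝ)).fun_add
      (((h0 j t).sub_const (a j)).fun_mul (hd j 3 (by norm_num) t))).fun_neg
    convert this using 1
    simp only [Nat.reduceAdd]
    ring
  have : (4 : ℕ) = 0 + 1 + 1 + 1 + 1 := by norm_num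
  rw [this, iteratedDeriv_succ, iteratedDeriv_succ, iteratedDeriv_succ, iteratedDeriv_succ,
    iteratedDeriv_zero, e1, e2, e3, e4]

set_option maxHeartbeats 1000000

/-- under the `k = 2, 3, 4` tensor bounds on `Θ°` and `‖M(θ) − η‖ ≤ 2r₀`,
the function `g(θ) = −½‖M(θ) − η‖²` satisfies
`|⟨∇⁴g(θ), u^{⊗4}⟩| ≤ (7 + 2r₀τ)·τ²·‖D(θ)u‖⁴` on `Θ°`. -/
theorem stmt8 {p q : ℕ} (M : (Fin p → ℝ) → Fin q → ℝ) (Θ : Set (Fin p → ℝ))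
    (τ r₀ : ℝ) (η : Fin q → ℝ)
    (hM : ContDiff ℝ 4 M) (hτ : 0 ≤ τ) (hr : 0 ≤ r₀)
    (hk2 : ∀ θ ∈ Θ, ∀ u : Fin p → ℝ,
      ∑ j, (iteratedFDeriv ℝ 2 (fun t => M t j) θ ![u, u]) ^ 2
        ≤ τ ^ 2 * Dq M θ u ^ 2)
    (hk3 : ∀ θ ∈ Θ, ∀ u : Fin p → ℝ,
      ∑ j, (iteratedFDeriv ℝ 3 (fun t => M t j) θ ![u, u, u]) ^ 2
        ≤ τ ^ 4 * Dq M θ u ^ 3)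
    (hk4 : ∀ θ ∈ Θ, ∀ u : Fin p → ℝ,
      ∑ j, (iteratedFDeriv ℝ 4 (fun t => M t j) θ ![u, u, u, u]) ^ 2
        ≤ τ ^ 6 * Dq M θ u ^ 4)
    (hη : ∀ θ ∈ Θ, Real.sqrt ((M θ - η) ⬝ᵥ (M θ - η)) ≤ 2 * r₀) :
    ∀ θ ∈ Θ, ∀ u : Fin p → ℝ,
      |iteratedFDeriv ℝ 4 (fun t => -(1/2) * ((M t - η) ⬝ᵥ (M t - η))) θ ![u, u, u, u]|
        ≤ (7 + 2 * r₀ * τ) * τ ^ 2 * Dq M θ u ^ 2 := by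
  intro θ hθ u
  -- vector rewrites
  have vec2 : (![u, u] : Fin 2 → Fin p → ℝ) = fun _ => u := by
    funext i; fin_cases i <;> rfl
  have vec3 : (![u, u, u] : Fin 3 → Fin p → ℝ) = fun _ => u := by
    funext i; fin_cases i <;> rfl
  have vec4 : (![u, u, u, u] : Fin 4 → Fin p → ℝ) = fun _ => u := by
    funext i; fin_cases i <;> rfl
  have hMj : ∀ j, ContDiff ℝ 4 (fun t => M t j) := fun j => contDiff_pi.mp hM j
  -- smoothness of g
  have hg : ContDiff ℝ 4 (fun t => -(1/2 : ℝ) * ((M t - η) ⬝ᵥ (M t - η))) := by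
    have : (fun t => -(1/2 : ℝ) * ((M t - η) ⬝ᵥ (M t - η)))
        = fun t => -(1/2 : ℝ) * ∑ j, (M t j - η j) * (M t j - η j) := by
      funext t; simp [dotProduct]
    rw [this]
    exact contDiff_const.mul (ContDiff.sum fun j _ =>
      ((hMj j).sub contDiff_const).mul ((hMj j).sub contDiff_const))
  -- abbreviations
  set c1 : Fin q → ℝ := fun j => fderiv ℝ (fun t => M t j) θ u with hc1
  set c2 : Fin q → ℝ := fun j => iteratedFDeriv ℝ 2 (fun t => M t j) θ (fun _ => u) with hc2
  set c3 : Fin q → ℝ := fun j => iteratedFDeriv ℝ 3 (fun t => M t j) θ (fun _ => u) with hc3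
  set c4 : Fin q → ℝ := fun j => iteratedFDeriv ℝ 4 (fun t => M t j) θ (fun _ => u) with hc4
  set m : Fin q → ℝ := fun j => M θ j - η j with hm
  set D : ℝ := Dq M θ u with hD
  -- the line functions
  set φ : Fin q → ℝ → ℝ := fun j s => M (θ + s • u) j with hφdef
  have hφ : ∀ j, ContDiff ℝ 4 (φ j) := by
    intro j
    exact (hMj j).comp (contDiff_const.add (contDiff_id.smul contDiff_const))
  have hφk : ∀ j, ∀ k : ℕ, k ≤ 4 →
      iteratedDeriv k (φ j) 0 = iteratedFDeriv ℝ k (fun t => M t j) θ (fun _ => u) := by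
    intro j k hk
    have := iteratedDeriv_line (hMj j) θ u k hk 0
    simpa using this
  -- LHS equals 4th derivative along the line
  have hline := iteratedDeriv_line hg θ u 4 le_rfl 0
  have hθ0 : θ + (0:ℝ) • u = θ := by simp
  rw [hθ0] at hline
  rw [vec4, ← hline]
  -- rewrite the 1-D function as a sum of squares
  have hGfun : (fun s : ℝ => -(1/2 : ℝ) * ((M (θ + s • u) - η) ⬝ᵥ (M (θ + s • u) - η)))
      = fun s : ℝ => ∑ j, -(1/2 : ℝ) * (φ j s - η j) ^ 2 := by
    funext s
    simp only [dotProduct, Pi.sub_apply, hφdef, Finset.mul_sum, neg_mul, sq]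
  rw [hGfun, fourth_deriv_sq φ η hφ]
  -- substitute directional derivatives
  have h1 : ∀ j, iteratedDeriv 1 (φ j) 0 = c1 j := by
    intro j; rw [hφk j 1 (by norm_num), iteratedFDeriv_one_apply]
  have h2 : ∀ j, iteratedDeriv 2 (φ j) 0 = c2 j := fun j => hφk j 2 (by norm_num)
  have h3 : ∀ j, iteratedDeriv 3 (φ j) 0 = c3 j := fun j => hφk j 3 (by norm_num)
  have h4 : ∀ j, iteratedDeriv 4 (φ j) 0 = c4 j := fun j => hφk j 4 le_rfl
  have h00 : ∀ j, φ j 0 - η j = m j := by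
    intro j; simp [hφdef, hm]
  simp only [h1, h2, h3, h4, h00]
  have hsum : ∑ j, -(3 * (c2 j) ^ 2 + 4 * (c1 j) * (c3 j) + (m j) * (c4 j))
      = -(3 * (∑ j, (c2 j)^2) + 4 * (∑ j, c1 j * c3 j) + ∑ j, m j * c4 j) := by
    rw [show -(3 * (∑ j, (c2 j)^2) + 4 * (∑ j, c1 j * c3 j) + ∑ j, m j * c4 j)
        = ∑ j, -(3 * (c2 j)^2 + 4 * (c1 j * c3 j) + m j * c4 j) from by
      rw [Finset.mul_sum, Finset.mul_sum, ← Finset.sum_add_distrib,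
        ← Finset.sum_add_distrib, ← Finset.sum_neg_distrib]]
    exact Finset.sum_congr rfl fun j _ => by ring
  rw [hsum, abs_neg]
  -- quantitative bounds
  set S2 : ℝ := ∑ j, (c2 j)^2 with hS2def
  set X : ℝ := ∑ j, c1 j * c3 j with hXdef
  set Y : ℝ := ∑ j, m j * c4 j with hYdef
  have hDnn : 0 ≤ D := Finset.sum_nonneg fun j _ => sq_nonneg _
  have hS1 : ∑ j, (c1 j)^2 = D := rfl
  have hS2nn : 0 ≤ S2 := Finset.sum_nonneg fun j _ => sq_nonneg _
  have hS2 : S2 ≤ τ^2 * D^2 := by have := hk2 θ hθ u; rwa [vec2] at this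
  have hS3 : ∑ j, (c3 j)^2 ≤ τ^4 * D^3 := by have := hk3 θ hθ u; rwa [vec3] at this
  have hS4 : ∑ j, (c4 j)^2 ≤ τ^6 * D^4 := by have := hk4 θ hθ u; rwa [vec4] at this
  have hBnn : 0 ≤ ∑ j, (m j)^2 := Finset.sum_nonneg fun j _ => sq_nonneg _
  have hB : ∑ j, (m j)^2 ≤ (2*r₀)^2 := by
    have h := hη θ hθ
    have hdp : ((M θ - η) ⬝ᵥ (M θ - η)) = ∑ j, (m j)^2 := by
      simp [dotProduct, sq, hm]
    rw [hdp] at h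
    calc ∑ j, (m j)^2 = Real.sqrt (∑ j, (m j)^2) ^ 2 := (Real.sq_sqrt hBnn).symm
    _ ≤ (2*r₀)^2 := pow_le_pow_left₀ (Real.sqrt_nonneg _) h 2
  have hτD2 : 0 ≤ τ^2 * D^2 := by positivity
  have hX : |X| ≤ τ^2 * D^2 := by
    have hcs := Finset.sum_mul_sq_le_sq_mul_sq Finset.univ c1 c3
    have hXsq : X^2 ≤ (τ^2 * D^2)^2 := by
      calc X^2 ≤ (∑ j, (c1 j)^2) * ∑ j, (c3 j)^2 := hcs
      _ = D * ∑ j, (c3 j)^2 := by rw [hS1]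
      _ ≤ D * (τ^4 * D^3) := mul_le_mul_of_nonneg_left hS3 hDnn
      _ = (τ^2 * D^2)^2 := by ring
    have := (pow_le_pow_iff_left₀ (abs_nonneg X) hτD2 (two_ne_zero)).mp
      (by rw [sq_abs]; exact hXsq)
    exact this
  have hYb : 0 ≤ 2*r₀*(τ*(τ^2*D^2)) := by positivity
  have hY : |Y| ≤ 2*r₀*(τ*(τ^2*D^2)) := by
    have hcs := Finset.sum_mul_sq_le_sq_mul_sq Finset.univ m c4
    have hYsq : Y^2 ≤ (2*r₀*(τ*(τ^2*D^2)))^2 := by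
      calc Y^2 ≤ (∑ j, (m j)^2) * ∑ j, (c4 j)^2 := hcs
      _ ≤ (2*r₀)^2 * (τ^6 * D^4) := by
          apply mul_le_mul hB hS4 (Finset.sum_nonneg fun j _ => sq_nonneg _) (by positivity)
      _ = (2*r₀*(τ*(τ^2*D^2)))^2 := by ring
    exact (pow_le_pow_iff_left₀ (abs_nonneg Y) hYb (two_ne_zero)).mp
      (by rw [sq_abs]; exact hYsq)
  obtain ⟨hX1, hX2⟩ := abs_le.mp hX
  obtain ⟨hY1, hY2⟩ := abs_le.mp hY
  rw [abs_le]
  constructor <;> nlinarith [hS2nn, hS2, hX1, hX2, hY1, hY2, hτD2]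
end

section
/- Let g(θ,η) = −½‖M(θ) − η‖² on ℝ^p × ℝ^q with M C³, and assume the k = 2,3 tensor bounds Σ_j⟨∇^k M_j(θ), u^{⊗k}⟩² ≤ τ^{2k−2}‖D(θ)u‖^{2k} and ‖M(θ)−η‖ ≤ 2r₀ with ρ = 2r₀τ. Then for every w = (u, s) ∈ ℝ^p × ℝ^q: |⟨∇³g(θ,η), w^{⊗3}⟩| ≤ (3+ρ)τ‖D(θ)u‖³ + 3τ‖s‖·‖D(θ)u‖². -/
open Matrix

section aux
variable {E F : Type*} [NormedAddCommGroup E] [NormedSpace ℝ E]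
  [NormedAddCommGroup F] [NormedSpace ℝ F]

lemma myShift (n : ℕ) (f : E → F) (hf : ContDiff ℝ n f) (x : E) :
    ∀ z, iteratedFDeriv ℝ n (fun y => f (x + y)) z = iteratedFDeriv ℝ n f (x + z) := by
  induction n with
  | zero => intro z; ext m; simp
  | succ n IH =>
    intro z
    have hfn : ContDiff ℝ n f := hf.of_le (by exact_mod_cast Nat.cast_le.2 (Nat.le_succ n))
    have h1 : (iteratedFDeriv ℝ n fun y => f (x + y))
        = fun z => iteratedFDeriv ℝ n f (x + z) := funext (IH hfn)
    have hd : DifferentiableAt ℝ (iteratedFDeriv ℝ n f) (x + z) :=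
      (hf.differentiable_iteratedFDeriv (by exact_mod_cast Nat.lt_succ_self n)).differentiableAt
    have hC : HasFDerivAt (fun z => iteratedFDeriv ℝ n f (x + z))
        (fderiv ℝ (iteratedFDeriv ℝ n f) (x + z)) z := by
      have := hd.hasFDerivAt.comp z ((hasFDerivAt_id z).const_add x)
      simpa [Function.comp_def] using this
    ext m
    rw [iteratedFDeriv_succ_apply_left, iteratedFDeriv_succ_apply_left, h1, hC.fderiv]

lemma myLine (n : ℕ) (f : E → F) (hf : ContDiff ℝ n f) (x w : E) :
    iteratedFDeriv ℝ n f x (fun _ => w) = iteratedDeriv n (fun t : ℝ => f (x + t • w)) 0 := by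
  have hshift : ContDiff ℝ n (fun y : E => f (x + y)) :=
    hf.comp (contDiff_const.add contDiff_id)
  let L : ℝ →L[ℝ] E := ContinuousLinearMap.smulRight (ContinuousLinearMap.id ℝ ℝ) w
  have hc : (fun t : ℝ => f (x + t • w)) = (fun y => f (x + y)) ∘ L := rfl
  rw [iteratedDeriv_eq_iteratedFDeriv, hc,
    ContinuousLinearMap.iteratedFDeriv_comp_right L hshift 0 le_rfl]
  have := myShift n f hf x (L 0)
  simp only [ContinuousMultilinearMap.compContinuousLinearMap_apply, this]
  have h0 : L (0:ℝ) = 0 := by simp [L]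
  have h1 : L (1:ℝ) = w := by simp [L]
  rw [h0, add_zero]
  simp [h1]

end aux

lemma cubic (f : ℝ → ℝ) (hf : ContDiff ℝ 3 f) (a b : ℝ) :
    iteratedDeriv 3 (fun t => -(1/2) * (f t - (a + t * b)) ^ 2) 0
      = -((f 0 - a) * iteratedDeriv 3 f 0 + 3 * (deriv f 0 - b) * iteratedDeriv 2 f 0) := by
  have h3 : ContDiff ℝ ((2:ℕ) + 1) f := by exact_mod_cast hf
  have hd0 : Differentiable ℝ f := (contDiff_succ_iff_deriv.mp h3).1
  have hf2 : ContDiff ℝ ((1:ℕ)+1) (deriv f) := by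
    exact_mod_cast (contDiff_succ_iff_deriv.mp h3).2.2
  have hd1 : Differentiable ℝ (deriv f) := (contDiff_succ_iff_deriv.mp hf2).1
  have hd2 : Differentiable ℝ (deriv (deriv f)) :=
    ((contDiff_succ_iff_deriv.mp hf2).2.2).differentiable (by simp)
  set c : ℝ → ℝ := fun t => a + t * b with hc
  have hdc : ∀ t, HasDerivAt c b t := fun t => by
    exact (hasDerivAt_mul_const (x := t) b).const_add a
  have s1 : deriv (fun t => -(1/2) * (f t - c t) ^ 2)
      = fun t => -((f t - c t) * (deriv f t - b)) := by
    funext t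
    have h : HasDerivAt (fun t => -(1/2) * (f t - c t) ^ 2)
        (-(1/2) * (2 * (f t - c t) ^ 1 * (deriv f t - b))) t :=
      (((hd0 t).hasDerivAt.sub (hdc t)).pow 2).const_mul _
    rw [h.deriv]; ring
  have s2 : deriv (deriv (fun t => -(1/2) * (f t - c t) ^ 2))
      = fun t => -((deriv f t - b) ^ 2 + (f t - c t) * deriv (deriv f) t) := by
    rw [s1]; funext t
    have h : HasDerivAt (fun t => -((f t - c t) * (deriv f t - b)))
        (-((deriv f t - b) * (deriv f t - b) + (f t - c t) * (deriv (deriv f) t - 0))) t :=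
      (((hd0 t).hasDerivAt.sub (hdc t)).mul ((hd1 t).hasDerivAt.sub (hasDerivAt_const t b))).neg
    rw [h.deriv]; ring
  have s3 : deriv (deriv (deriv (fun t => -(1/2) * (f t - c t) ^ 2))) 0
      = -((f 0 - c 0) * deriv (deriv (deriv f)) 0
          + 3 * (deriv f 0 - b) * deriv (deriv f) 0) := by
    rw [s2]
    have h : HasDerivAt (fun t => -((deriv f t - b) ^ 2 + (f t - c t) * deriv (deriv f) t))
        (-((2 * (deriv f 0 - b) ^ 1 * (deriv (deriv f) 0 - 0))
          + (((deriv f 0 - b) * deriv (deriv f) 0)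
            + (f 0 - c 0) * deriv (deriv (deriv f)) 0))) 0 :=
      ((((hd1 0).hasDerivAt.sub (hasDerivAt_const 0 b)).pow 2).add
        (((hd0 0).hasDerivAt.sub (hdc 0)).mul (hd2 0).hasDerivAt)).neg
    rw [h.deriv]; ring
  have e3 : ∀ (g : ℝ → ℝ), iteratedDeriv 3 g = deriv (deriv (deriv g)) := fun g => by
    rw [show (3:ℕ) = 0+1+1+1 from rfl]
    simp only [iteratedDeriv_succ, iteratedDeriv_zero]
  have e2 : ∀ (g : ℝ → ℝ), iteratedDeriv 2 g = deriv (deriv g) := fun g => by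
    rw [show (2:ℕ) = 0+1+1 from rfl]
    simp only [iteratedDeriv_succ, iteratedDeriv_zero]
  rw [e3, e3, e2]
  simp only [hc] at s3 ⊢
  rw [s3]; simp

lemma csum {n : ℕ} (f g : Fin n → ℝ) :
    |∑ j, f j * g j| ≤ Real.sqrt (∑ j, f j ^ 2) * Real.sqrt (∑ j, g j ^ 2) := by
  rw [← Real.sqrt_sq_eq_abs, ← Real.sqrt_mul (by positivity)]
  exact Real.sqrt_le_sqrt (Finset.sum_mul_sq_le_sq_mul_sq _ _ _)


/-- for `g(θ,η) = −½‖M(θ) − η‖²` on `ℝ^p × ℝ^q`, under the `k = 2, 3`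
tensor bounds on `Θ°`, `‖M(θ) − η‖ ≤ 2r₀` and `ρ = 2r₀τ`, one has for every
`w = (u, s)`: `|⟨∇³g(θ,η), w^{⊗3}⟩| ≤ (3+ρ)τ‖D(θ)u‖³ + 3τ‖s‖‖D(θ)u‖²`. -/
theorem stmt9 {p q : ℕ} (M : (Fin p → ℝ) → Fin q → ℝ) (Θ : Set (Fin p → ℝ))
    (τ r₀ ρ : ℝ) (θ : Fin p → ℝ) (η : Fin q → ℝ)
    (hM : ContDiff ℝ 3 M) (hτ : 0 ≤ τ) (hr : 0 ≤ r₀) (hρ : ρ = 2 * r₀ * τ)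
    (hθ : θ ∈ Θ)
    (hk2 : ∀ t ∈ Θ, ∀ u : Fin p → ℝ,
      ∑ j, (iteratedFDeriv ℝ 2 (fun z => M z j) t ![u, u]) ^ 2
        ≤ τ ^ 2 * Dq M t u ^ 2)
    (hk3 : ∀ t ∈ Θ, ∀ u : Fin p → ℝ,
      ∑ j, (iteratedFDeriv ℝ 3 (fun z => M z j) t ![u, u, u]) ^ 2
        ≤ τ ^ 4 * Dq M t u ^ 3)
    (hη : Real.sqrt ((M θ - η) ⬝ᵥ (M θ - η)) ≤ 2 * r₀) :
    ∀ (u : Fin p → ℝ) (s : Fin q → ℝ),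
      |iteratedFDeriv ℝ 3
          (fun x : (Fin p → ℝ) × (Fin q → ℝ) => -(1/2) * ((M x.1 - x.2) ⬝ᵥ (M x.1 - x.2)))
          (θ, η) ![(u, s), (u, s), (u, s)]|
        ≤ (3 + ρ) * τ * Real.sqrt (Dq M θ u) ^ 3
          + 3 * τ * Real.sqrt (s ⬝ᵥ s) * Dq M θ u := by
  intro u s
  have hMj : ∀ j, ContDiff ℝ 3 (fun z => M z j) := fun j => (contDiff_pi.mp hM) j
  -- the line functions
  set φ : Fin q → ℝ → ℝ := fun j t => M (θ + t • u) j with hφ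
  have hline : ContDiff ℝ 3 (fun t : ℝ => θ + t • u) :=
    contDiff_const.add (contDiff_id.smul contDiff_const)
  have hφC : ∀ j, ContDiff ℝ 3 (φ j) := fun j => (hMj j).comp hline
  -- identify line derivatives of M with iterated fderivs
  have hmu3 : (fun _ : Fin 3 => u) = ![u, u, u] := by funext i; fin_cases i <;> rfl
  have hmu2 : (fun _ : Fin 2 => u) = ![u, u] := by funext i; fin_cases i <;> rfl
  have hT3 : ∀ j, iteratedDeriv 3 (φ j) 0 = iteratedFDeriv ℝ 3 (fun z => M z j) θ ![u, u, u] :=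
    fun j => by rw [← hmu3, myLine 3 (fun z => M z j) (hMj j) θ u]
  have hT2 : ∀ j, iteratedDeriv 2 (φ j) 0 = iteratedFDeriv ℝ 2 (fun z => M z j) θ ![u, u] :=
    fun j => by
      rw [← hmu2, myLine 2 (fun z => M z j) ((hMj j).of_le (by norm_num)) θ u]
  have hT1 : ∀ j, deriv (φ j) 0 = fderiv ℝ (fun z => M z j) θ u := fun j => by
    have := myLine 1 (fun z => M z j) ((hMj j).of_le (by norm_num)) θ u
    rw [iteratedFDeriv_one_apply, iteratedDeriv_one] at this
    exact this.symm
  have hφ0 : ∀ j, φ j 0 = M θ j := fun j => by simp [hφ]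
  -- rewrite the target function as a sum
  have hGeq : (fun x : (Fin p → ℝ) × (Fin q → ℝ) =>
        -(1/2) * ((M x.1 - x.2) ⬝ᵥ (M x.1 - x.2)))
      = (∑ j, (fun x : (Fin p → ℝ) × (Fin q → ℝ) => -(1/2) * (M x.1 j - x.2 j) ^ 2) ·) := by
    funext x
    simp only [dotProduct, Pi.sub_apply, Finset.mul_sum, Finset.sum_apply]
    exact Finset.sum_congr rfl fun j _ => by ring
  have hGj : ∀ j : Fin q, ContDiff ℝ 3
      (fun x : (Fin p → ℝ) × (Fin q → ℝ) => -(1/2) * (M x.1 j - x.2 j) ^ 2) := by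
    intro j
    have h1 : ContDiff ℝ 3 (fun x : (Fin p → ℝ) × (Fin q → ℝ) => M x.1 j) :=
      (hMj j).comp contDiff_fst
    have h2 : ContDiff ℝ 3 (fun x : (Fin p → ℝ) × (Fin q → ℝ) => x.2 j) :=
      (contDiff_pi.mp contDiff_snd) j
    exact contDiff_const.mul ((h1.sub h2).pow 2)
  have hmw : ![((u, s) : (Fin p → ℝ) × (Fin q → ℝ)), (u, s), (u, s)]
      = fun _ : Fin 3 => ((u, s) : (Fin p → ℝ) × (Fin q → ℝ)) := by
    funext i; fin_cases i <;> rfl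
  rw [hGeq, hmw, iteratedFDeriv_sum (fun j _ => hGj j)]
  simp only [Finset.sum_apply, ContinuousMultilinearMap.sum_apply]
  -- compute each term via the line lemma and the cubic lemma
  have hterm : ∀ j : Fin q,
      iteratedFDeriv ℝ 3
        (fun x : (Fin p → ℝ) × (Fin q → ℝ) => -(1/2) * (M x.1 j - x.2 j) ^ 2)
        (θ, η) (fun _ => (u, s))
      = -((M θ j - η j) * iteratedFDeriv ℝ 3 (fun z => M z j) θ ![u, u, u]
          + 3 * (fderiv ℝ (fun z => M z j) θ u - s j)
            * iteratedFDeriv ℝ 2 (fun z => M z j) θ ![u, u]) := by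
    intro j
    rw [myLine 3 _ (hGj j) (θ, η) (u, s)]
    have hfun : (fun t : ℝ =>
        (fun x : (Fin p → ℝ) × (Fin q → ℝ) => -(1/2) * (M x.1 j - x.2 j) ^ 2)
          ((θ, η) + t • (u, s)))
        = fun t : ℝ => -(1/2) * (φ j t - (η j + t * s j)) ^ 2 := by
      funext t; rfl
    rw [hfun, cubic (φ j) (hφC j) (η j) (s j), hT3 j, hT2 j, hT1 j, hφ0 j]
  simp only [hterm]
  -- now pure algebra / Cauchy-Schwarz
  set r : Fin q → ℝ := fun j => M θ j - η j with hrdef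
  set d : Fin q → ℝ := fun j => fderiv ℝ (fun z => M z j) θ u with hddef
  set A : Fin q → ℝ := fun j => iteratedFDeriv ℝ 3 (fun z => M z j) θ ![u, u, u] with hAdef
  set B : Fin q → ℝ := fun j => iteratedFDeriv ℝ 2 (fun z => M z j) θ ![u, u] with hBdef
  have hsplit : ∑ j, -((r j) * A j + 3 * (d j - s j) * B j)
      = -(∑ j, r j * A j) - 3 * (∑ j, d j * B j) + 3 * (∑ j, s j * B j) := by
    rw [← Finset.sum_neg_distrib, Finset.mul_sum, Finset.mul_sum, ← Finset.sum_sub_distrib,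
      ← Finset.sum_add_distrib]
    exact Finset.sum_congr rfl fun j _ => by ring
  rw [hsplit]
  set Dv : ℝ := Dq M θ u with hDv
  have hD0 : 0 ≤ Dv := Finset.sum_nonneg fun j _ => sq_nonneg _
  have hsq : Real.sqrt Dv ^ 2 = Dv := Real.sq_sqrt hD0
  have hsd : Real.sqrt (∑ j, d j ^ 2) = Real.sqrt Dv := by rw [hDv]; rfl
  -- bound 1
  have hb1 : |∑ j, r j * A j| ≤ (2 * r₀) * (τ ^ 2 * Real.sqrt Dv ^ 3) := by
    refine le_trans (csum r A) (mul_le_mul ?_ ?_ (Real.sqrt_nonneg _) (by positivity))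
    · calc Real.sqrt (∑ j, r j ^ 2) = Real.sqrt ((M θ - η) ⬝ᵥ (M θ - η)) := by
            congr 1; simp [dotProduct, hrdef, sq]
        _ ≤ 2 * r₀ := hη
    · have h1 : ∑ j, A j ^ 2 ≤ τ ^ 4 * Dv ^ 3 := hk3 θ hθ u
      have e : (Real.sqrt Dv ^ 3) ^ 2 = Dv ^ 3 := by
        rw [← pow_mul, show 3 * 2 = 2 * 3 from rfl, pow_mul, hsq]
      have h2 : Real.sqrt (τ ^ 4 * Dv ^ 3) = τ ^ 2 * Real.sqrt Dv ^ 3 := by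
        rw [show τ ^ 4 * Dv ^ 3 = (τ ^ 2 * Real.sqrt Dv ^ 3) ^ 2 by rw [mul_pow, e]; ring]
        exact Real.sqrt_sq (by positivity)
      rw [← h2]
      exact Real.sqrt_le_sqrt h1
  have hB2 : Real.sqrt (∑ j, B j ^ 2) ≤ τ * Dv := by
    have h1 : ∑ j, B j ^ 2 ≤ τ ^ 2 * Dv ^ 2 := hk2 θ hθ u
    have h2 : Real.sqrt (τ ^ 2 * Dv ^ 2) = τ * Dv := by
      rw [show τ ^ 2 * Dv ^ 2 = (τ * Dv) ^ 2 by ring]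
      exact Real.sqrt_sq (by positivity)
    rw [← h2]; exact Real.sqrt_le_sqrt h1
  have hb2 : |∑ j, d j * B j| ≤ τ * Real.sqrt Dv ^ 3 := by
    refine le_trans (csum d B) ?_
    rw [hsd]
    calc Real.sqrt Dv * Real.sqrt (∑ j, B j ^ 2) ≤ Real.sqrt Dv * (τ * Dv) :=
          mul_le_mul_of_nonneg_left hB2 (Real.sqrt_nonneg _)
      _ = τ * Real.sqrt Dv ^ 3 := by rw [pow_succ, hsq]; ring
  have hb3 : |∑ j, s j * B j| ≤ Real.sqrt (s ⬝ᵥ s) * (τ * Dv) := by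
    refine le_trans (csum s B) (mul_le_mul ?_ hB2 (Real.sqrt_nonneg _) (Real.sqrt_nonneg _))
    rw [show s ⬝ᵥ s = ∑ j, s j ^ 2 by simp [dotProduct, sq]]
  have habs : |-(∑ j, r j * A j) - 3 * (∑ j, d j * B j) + 3 * (∑ j, s j * B j)|
      ≤ |∑ j, r j * A j| + 3 * |∑ j, d j * B j| + 3 * |∑ j, s j * B j| := by
    calc |-(∑ j, r j * A j) - 3 * (∑ j, d j * B j) + 3 * (∑ j, s j * B j)|
        ≤ |-(∑ j, r j * A j) - 3 * (∑ j, d j * B j)| + |3 * (∑ j, s j * B j)| := abs_add_le _ _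
      _ ≤ |-(∑ j, r j * A j)| + |3 * (∑ j, d j * B j)| + |3 * (∑ j, s j * B j)| := by
          gcongr; exact abs_sub _ _
      _ = |∑ j, r j * A j| + 3 * |∑ j, d j * B j| + 3 * |∑ j, s j * B j| := by
          rw [abs_neg, abs_mul, abs_mul]; norm_num
  have final : |∑ j, r j * A j| + 3 * |∑ j, d j * B j| + 3 * |∑ j, s j * B j|
      ≤ (3 + ρ) * τ * Real.sqrt Dv ^ 3 + 3 * τ * Real.sqrt (s ⬝ᵥ s) * Dv := by
    have key : (3 + ρ) * τ * Real.sqrt Dv ^ 3 + 3 * τ * Real.sqrt (s ⬝ᵥ s) * Dv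
        = 2 * r₀ * (τ ^ 2 * Real.sqrt Dv ^ 3) + 3 * (τ * Real.sqrt Dv ^ 3)
          + 3 * (Real.sqrt (s ⬝ᵥ s) * (τ * Dv)) := by rw [hρ]; ring
    rw [key]; linarith
  exact le_trans habs final
end

section
/- Let w ↦ p_w := σ² tr(AᵀA (AᵀA + wG₀²)⁻¹) for a q×p matrix A, positive definite p×p matrix G₀², and σ, w > 0. Then p_w is non-increasing in w; consequently, for any constant C₀ > 0, the set {w > 0 : w ≤ C₀ p_w} is an interval of the form (0, w*] (possibly empty), i.e. if w ≤ C₀p_w and 0 < w' ≤ w then w' ≤ C₀ p_{w'}. -/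
open Matrix

/-- The effective dimension `p_w = σ² tr(AᵀA (AᵀA + wG₀²)⁻¹)`. -/
noncomputable def effDim {p q : ℕ} (σ : ℝ) (A : Matrix (Fin q) (Fin p) ℝ)
    (G0 : Matrix (Fin p) (Fin p) ℝ) (w : ℝ) : ℝ :=
  σ ^ 2 * ((Aᵀ * A) * (Aᵀ * A + w • G0)⁻¹).trace

open scoped MatrixOrder in
noncomputable def Matrix.PosSemidef.sqrt {k : ℕ} {X : Matrix (Fin k) (Fin k) ℝ}
    (_ : X.PosSemidef) : Matrix (Fin k) (Fin k) ℝ := CFC.sqrt X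

open scoped MatrixOrder in
lemma Matrix.PosSemidef.sqrt_mul_self {k : ℕ} {X : Matrix (Fin k) (Fin k) ℝ}
    (hX : X.PosSemidef) : hX.sqrt * hX.sqrt = X :=
  CFC.sqrt_mul_sqrt_self X hX.nonneg

open scoped MatrixOrder in
lemma Matrix.PosSemidef.posSemidef_sqrt {k : ℕ} {X : Matrix (Fin k) (Fin k) ℝ}
    (hX : X.PosSemidef) : hX.sqrt.PosSemidef :=
  (CFC.sqrt_nonneg X).posSemidef

namespace Stmt18Aux

variable {n : ℕ}

lemma trace_nonneg {X : Matrix (Fin n) (Fin n) ℝ} (hX : X.PosSemidef) : 0 ≤ X.trace := by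
  rw [Matrix.trace]
  refine Finset.sum_nonneg fun i _ => ?_
  exact hX.diag_nonneg

lemma psd_smul {c : ℝ} {X : Matrix (Fin n) (Fin n) ℝ} (hc : 0 ≤ c) (hX : X.PosSemidef) :
    (c • X).PosSemidef := by
  refine ⟨?_, fun x => ?_⟩
  · show (c • X)ᴴ = c • X
    rw [conjTranspose_smul, hX.1.eq]
    simp
  · exact (hX.smul hc).2 x

lemma trace_mul_nonneg {B C : Matrix (Fin n) (Fin n) ℝ} (hB : B.PosSemidef)
    (hC : C.PosSemidef) : 0 ≤ (B * C).trace := by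
  have hR : hB.sqrt * hB.sqrt = B := hB.sqrt_mul_self
  have h1 : B * C = hB.sqrt * (hB.sqrt * C) := by rw [← Matrix.mul_assoc, hR]
  rw [h1, trace_mul_comm, Matrix.mul_assoc]
  have := hC.mul_mul_conjTranspose_same hB.sqrt
  rw [hB.posSemidef_sqrt.1.eq] at this
  exact trace_nonneg (by rwa [Matrix.mul_assoc] at this)

end Stmt18Aux

/-- `w ↦ p_w` is non-increasing on `(0,∞)`; consequently, for any `C₀ > 0`,
if `w ≤ C₀ p_w` and `0 < w' ≤ w` then `w' ≤ C₀ p_{w'}` (the set `{w > 0 : w ≤ C₀ p_w}`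
is downward closed in `(0,∞)`). -/
theorem stmt18 {p q : ℕ} (σ : ℝ) (A : Matrix (Fin q) (Fin p) ℝ)
    (G0 : Matrix (Fin p) (Fin p) ℝ) (hσ : 0 < σ) (hG0 : G0.PosDef) :
    (∀ w w' : ℝ, 0 < w' → w' ≤ w → effDim σ A G0 w ≤ effDim σ A G0 w') ∧
    (∀ C₀ : ℝ, 0 < C₀ → ∀ w w' : ℝ, 0 < w' → w' ≤ w →
      w ≤ C₀ * effDim σ A G0 w → w' ≤ C₀ * effDim σ A G0 w') := by
  classical
  set M : Matrix (Fin p) (Fin p) ℝ := Aᵀ * A with hMdef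
  have hMpsd : M.PosSemidef := by
    have := posSemidef_conjTranspose_mul_self A
    simpa [hMdef] using this
  set S : Matrix (Fin p) (Fin p) ℝ := hG0.posSemidef.sqrt with hSdef
  have hSpsd : S.PosSemidef := hG0.posSemidef.posSemidef_sqrt
  have hSS : S * S = G0 := hG0.posSemidef.sqrt_mul_self
  have hSdetu : IsUnit S.det := by
    have h : S.det * S.det = G0.det := by rw [← det_mul, hSS]
    have hg := hG0.det_pos
    have : S.det ≠ 0 := by intro h0; rw [h0, mul_zero] at h; exact hg.ne h
    exact this.isUnit
  have hSinv : S * S⁻¹ = 1 := mul_nonsing_inv _ hSdetu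
  have hSinv' : S⁻¹ * S = 1 := nonsing_inv_mul _ hSdetu
  have hSih : S⁻¹.IsHermitian := hSpsd.1.inv
  set B : Matrix (Fin p) (Fin p) ℝ := S⁻¹ * M * S⁻¹ with hBdef
  have hBpsd : B.PosSemidef := by
    have := hMpsd.conjTranspose_mul_mul_same S⁻¹
    rwa [hSih.eq] at this
  have hBB : (B * B).PosSemidef := by
    have := hMpsd.conjTranspose_mul_mul_same S⁻¹
    have h2 := hBpsd.pow 2
    rwa [pow_two] at h2
  -- key reformulation
  have key : ∀ w : ℝ, 0 < w →
      effDim σ A G0 w = σ ^ 2 * (B * (B + w • 1)⁻¹).trace := by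
    intro w hw
    have hSBS : S * B * S = M := by
      have : S * B * S = (S * S⁻¹) * M * (S⁻¹ * S) := by rw [hBdef]; noncomm_ring
      rw [this, hSinv, hSinv', one_mul, mul_one]
    have hfact : M + w • G0 = S * (B + w • 1) * S := by
      rw [Matrix.mul_add, Matrix.add_mul, hSBS]
      congr 1
      rw [Matrix.mul_smul, Matrix.smul_mul, mul_one, hSS]
    have hinv : (M + w • G0)⁻¹ = S⁻¹ * ((B + w • 1)⁻¹ * S⁻¹) := by
      rw [hfact, Matrix.mul_inv_rev, Matrix.mul_inv_rev]
    have htr : (M * (M + w • G0)⁻¹).trace = (B * (B + w • 1)⁻¹).trace := by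
      rw [hinv]
      have e1 : M * (S⁻¹ * ((B + w • 1)⁻¹ * S⁻¹)) =
          (M * S⁻¹ * (B + w • 1)⁻¹) * S⁻¹ := by noncomm_ring
      rw [e1, trace_mul_comm]
      have e2 : S⁻¹ * (M * S⁻¹ * (B + w • 1)⁻¹) = B * (B + w • 1)⁻¹ := by
        rw [hBdef]; noncomm_ring
      rw [e2]
    rw [effDim, ← hMdef, htr]
  -- core monotonicity
  have mono : ∀ w w' : ℝ, 0 < w' → w' ≤ w →
      (B * (B + w • 1)⁻¹).trace ≤ (B * (B + w' • 1)⁻¹).trace := by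
    intro w w' hw' hww
    have hw : 0 < w := lt_of_lt_of_le hw' hww
    have hwI : (w • (1 : Matrix (Fin p) (Fin p) ℝ)).PosDef := by
      rw [smul_one_eq_diagonal]
      exact posDef_diagonal_iff.mpr fun _ => hw
    have hwI' : (w' • (1 : Matrix (Fin p) (Fin p) ℝ)).PosDef := by
      rw [smul_one_eq_diagonal]
      exact posDef_diagonal_iff.mpr fun _ => hw'
    have hSw : (B + w • 1).PosDef := Matrix.PosDef.posSemidef_add hBpsd hwI
    have hSw' : (B + w' • 1).PosDef := Matrix.PosDef.posSemidef_add hBpsd hwI'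
    have hdw : IsUnit (B + w • 1).det := hSw.det_pos.ne'.isUnit
    have hdw' : IsUnit (B + w' • 1).det := hSw'.det_pos.ne'.isUnit
    have h1 : (B + w • 1) * (B + w • 1)⁻¹ = 1 := mul_nonsing_inv _ hdw
    have h2 : (B + w' • 1)⁻¹ * (B + w' • 1) = 1 := nonsing_inv_mul _ hdw'
    -- resolvent identity
    have hres : (B + w' • 1)⁻¹ - (B + w • 1)⁻¹ =
        (w - w') • ((B + w' • 1)⁻¹ * (B + w • 1)⁻¹) := by
      have e1 : (B + w' • 1)⁻¹ - (B + w • 1)⁻¹ =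
          (B + w' • 1)⁻¹ * ((B + w • 1) * (B + w • 1)⁻¹) -
          ((B + w' • 1)⁻¹ * (B + w' • 1)) * (B + w • 1)⁻¹ := by
        rw [h1, h2, mul_one, one_mul]
      have e2 : (B + w' • 1)⁻¹ * ((B + w • 1) * (B + w • 1)⁻¹) -
          ((B + w' • 1)⁻¹ * (B + w' • 1)) * (B + w • 1)⁻¹ =
          (B + w' • 1)⁻¹ * (((B + w • 1) - (B + w' • 1)) * (B + w • 1)⁻¹) := by
        noncomm_ring
      have e3 : (B + w • 1) - (B + w' • 1) = (w - w') • (1 : Matrix (Fin p) (Fin p) ℝ) := by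
        rw [add_sub_add_left_eq_sub, ← sub_smul]
      rw [e1, e2, e3, Matrix.smul_mul, one_mul, Matrix.mul_smul]
    -- the product of the two inverses is PSD
    have hprod : ((B + w' • 1)⁻¹ * (B + w • 1)⁻¹).PosSemidef := by
      have hexp : (B + w • 1) * (B + w' • 1) =
          B * B + w' • B + w • B + (w * w') • (1 : Matrix (Fin p) (Fin p) ℝ) := by
        simp only [Matrix.mul_add, Matrix.add_mul, Matrix.smul_mul, Matrix.mul_smul,
          one_mul, mul_one, smul_add, smul_smul, ← hBdef]
        module
      have hppd : ((B + w • 1) * (B + w' • 1)).PosDef := by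
        rw [hexp]
        refine Matrix.PosDef.posSemidef_add
          ((hBB.add (Stmt18Aux.psd_smul hw'.le hBpsd)).add
            (Stmt18Aux.psd_smul hw.le hBpsd)) ?_
        rw [smul_one_eq_diagonal]
        exact posDef_diagonal_iff.mpr fun _ => mul_pos hw hw'
      have := hppd.inv
      rw [Matrix.mul_inv_rev] at this
      exact this.posSemidef
    have hkey : (B * (B + w' • 1)⁻¹).trace - (B * (B + w • 1)⁻¹).trace =
        (w - w') * (B * ((B + w' • 1)⁻¹ * (B + w • 1)⁻¹)).trace := by
      rw [← trace_sub, ← Matrix.mul_sub, hres, Matrix.mul_smul, trace_smul, smul_eq_mul]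
    have hnn : 0 ≤ (w - w') * (B * ((B + w' • 1)⁻¹ * (B + w • 1)⁻¹)).trace :=
      mul_nonneg (sub_nonneg.2 hww) (Stmt18Aux.trace_mul_nonneg hBpsd hprod)
    linarith [hkey, hnn]
  have first : ∀ w w' : ℝ, 0 < w' → w' ≤ w → effDim σ A G0 w ≤ effDim σ A G0 w' := by
    intro w w' hw' hww
    have hw : 0 < w := lt_of_lt_of_le hw' hww
    rw [key w hw, key w' hw']
    exact mul_le_mul_of_nonneg_left (mono w w' hw' hww) (sq_nonneg σ)
  refine ⟨first, fun C₀ hC w w' hw' hww hwle => ?_⟩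
  calc w' ≤ w := hww
    _ ≤ C₀ * effDim σ A G0 w := hwle
    _ ≤ C₀ * effDim σ A G0 w' := mul_le_mul_of_nonneg_left (first w w' hw' hww) hC.le
end
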